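/- arXiv:1007.3767 — 2 statements merged into one kernel-verified Lean document; each statement's English description precedes it below -/
import Mathlib

section
/- Let G be a graph on n vertices containing at most p·n cherries such that each vertex of G is contained in at most q cherries, where p and q are positive reals. If k is a positive integer with k ≤ (1/3)·(5/6)^5·(n−2)/(q+3p), then every locally k-bounded edge colouring of the complete graph K_n contains a copy of G that is properly coloured, i.e., there is an injection σ: V(G) → V(K_n) such that any two edges of G sharing a vertex are mapped by σ to edges of K_n receiving different colours. -/
open Finset

namespace BKP

set_option linter.unusedSectionVars false
set_option maxHeartbeats 1000000

attribute [local instance] Classical.propDecidable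

noncomputable section

variable {Ω ι S : Type*} [Fintype Ω] [DecidableEq Ω] [DecidableEq ι] [DecidableEq S]
variable (E : ι → Finset Ω) (slots : ι → Finset S) (T : Finset ι) (P m : ℝ)

/-- pairwise slot-disjointness (independence in the conflict graph). -/
def ind (A : Finset ι) : Prop := (A : Set ι).Pairwise fun i j => Disjoint (slots i) (slots j)

/-- independence polynomial with fugacity `-P`. -/
def Zf (V : Finset ι) : ℝ :=
  ∑ A ∈ V.powerset, if ind slots A then (-P) ^ A.card else 0

/-- non-neighbours of `j` inside `V`. -/
def NB (V : Finset ι) (j : ι) : Finset ι := V.filter fun i => Disjoint (slots j) (slots i)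

/-- elements avoiding all events of `V`. -/
def Av (V : Finset ι) : Finset Ω := univ.filter fun ω => ∀ j ∈ V, ω ∉ E j

def Wf (V : Finset ι) : ℝ := ((Av E V).card : ℝ)

lemma ind_empty : ind slots ∅ := by simp [ind]

lemma Zf_empty : Zf slots P ∅ = 1 := by
  simp [Zf, ind_empty]

lemma mem_NB {V : Finset ι} {j i : ι} :
    i ∈ NB slots V j ↔ i ∈ V ∧ Disjoint (slots j) (slots i) := by
  simp [NB]

lemma not_mem_NB {V : Finset ι} {j : ι} (hj : (slots j).Nonempty) : j ∉ NB slots V j := by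
  rw [mem_NB]
  rintro ⟨-, hd⟩
  exact hj.ne_empty (by simpa [Finset.bot_eq_empty] using disjoint_self.1 hd)

lemma NB_subset {V : Finset ι} {j : ι} : NB slots V j ⊆ V := Finset.filter_subset _ _

lemma NB_subset_of_not_mem {V : Finset ι} {j : ι} (hj : (slots j).Nonempty) (hjV : j ∉ V) :
    NB slots V j ⊆ V := NB_subset slots

lemma ind_insert {V' : Finset ι} {j : ι} (hjV : j ∉ V') {A : Finset ι} (hA : A ⊆ V') :
    ind slots (insert j A) ↔ ind slots A ∧ A ⊆ NB slots V' j := by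
  have hjA : j ∉ A := fun h => hjV (hA h)
  have hsymm : Symmetric (fun i j : ι => Disjoint (slots i) (slots j)) := fun a b hab => hab.symm
  haveI : Std.Symm (fun i j : ι => Disjoint (slots i) (slots j)) := ⟨fun a b h => hsymm h⟩
  rw [ind, Finset.coe_insert, Set.pairwise_insert_of_symm]
  constructor
  · rintro ⟨h1, h2⟩
    refine ⟨h1, fun i hi => ?_⟩
    have hi' : i ∈ A := hi
    have hne : j ≠ i := fun e => hjA (e ▸ hi')
    exact (mem_NB slots).2 ⟨hA hi', (h2 i hi' hne)⟩
  · rintro ⟨h1, h2⟩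
    exact ⟨h1, fun i hi _ => ((mem_NB slots).1 (h2 hi)).2⟩

/-- deletion identity for the independence polynomial. -/
lemma Zf_insert {V' : Finset ι} {j : ι} (hjV : j ∉ V') :
    Zf slots P (insert j V') = Zf slots P V' - P * Zf slots P (NB slots V' j) := by
  have h1 : Zf slots P (insert j V')
      = ∑ A ∈ V'.powerset, (if ind slots A then (-P) ^ A.card else 0)
      + ∑ A ∈ V'.powerset, (if ind slots (insert j A) then (-P) ^ (insert j A).card else 0) := by
    rw [Zf, Finset.sum_powerset_insert hjV]
  have h2 : ∀ A ∈ V'.powerset,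
      (if ind slots (insert j A) then (-P) ^ (insert j A).card else 0)
      = (-P) * (if ind slots A ∧ A ⊆ NB slots V' j then (-P) ^ A.card else 0) := by
    intro A hA
    have hAs : A ⊆ V' := Finset.mem_powerset.1 hA
    have hjA : j ∉ A := fun h => hjV (hAs h)
    rw [Finset.card_insert_of_notMem hjA]
    simp only [ind_insert slots hjV hAs, pow_succ]
    by_cases h : ind slots A ∧ A ⊆ NB slots V' j <;> simp [h] <;> ring
  have h3 : ∑ A ∈ V'.powerset, (if ind slots A ∧ A ⊆ NB slots V' j then (-P) ^ A.card else 0)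
      = Zf slots P (NB slots V' j) := by
    rw [Zf, ← Finset.sum_subset (Finset.powerset_mono.2 (NB_subset slots))]
    · refine Finset.sum_congr rfl fun A hA => ?_
      have hss : A ⊆ NB slots V' j := Finset.mem_powerset.1 hA
      by_cases h : ind slots A <;> simp [h, hss]
    · intro A _ hA
      have : ¬ A ⊆ NB slots V' j := fun h => hA (Finset.mem_powerset.2 h)
      simp [this]
  rw [h1, Finset.sum_congr rfl h2, ← Finset.mul_sum, h3, ← Zf]
  ring

lemma NB_erase_eq {V : Finset ι} {j : ι} (hne : (slots j).Nonempty) :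
    NB slots (V.erase j) j = NB slots V j := by
  ext i
  simp only [mem_NB, Finset.mem_erase]
  constructor
  · rintro ⟨⟨-, h⟩, hd⟩; exact ⟨h, hd⟩
  · rintro ⟨h, hd⟩
    refine ⟨⟨?_, h⟩, hd⟩
    rintro rfl
    exact hne.ne_empty (by simpa [Finset.bot_eq_empty] using disjoint_self.1 hd)

lemma Zf_erase {V : Finset ι} {j : ι} (hj : j ∈ V) (hne : (slots j).Nonempty) :
    Zf slots P V = Zf slots P (V.erase j) - P * Zf slots P (NB slots V j) := by
  have h := Zf_insert slots P (Finset.notMem_erase j V)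
  rw [Finset.insert_erase hj, NB_erase_eq slots hne] at h
  exact h

/-- clique deletion identity. -/
lemma Zf_sdiff_clique {s₀ : S} :
    ∀ (K' : Finset ι) (V : Finset ι), K' ⊆ V → (∀ j ∈ K', s₀ ∈ slots j) →
    Zf slots P (V \ K') = Zf slots P V + P * ∑ j ∈ K', Zf slots P (NB slots V j) := by
  intro K'
  induction K' using Finset.induction_on with
  | empty => intro V _ _; simp
  | @insert j₀ K'' hj₀ ih =>
    intro V hKV hs
    have hj₀V : j₀ ∈ V := hKV (mem_insert_self _ _)
    have hVsd : V \ insert j₀ K'' = (V.erase j₀) \ K'' := by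
      ext x; simp only [mem_sdiff, mem_erase, mem_insert]; tauto
    have hK'' : K'' ⊆ V.erase j₀ := by
      intro x hx
      exact mem_erase.2 ⟨fun e => hj₀ (e ▸ hx), hKV (mem_insert_of_mem hx)⟩
    have hNB : ∀ j ∈ K'', NB slots (V.erase j₀) j = NB slots V j := by
      intro j hj
      have hnd : ¬ Disjoint (slots j) (slots j₀) := fun hd =>
        (Finset.disjoint_left.1 hd) (hs j (mem_insert_of_mem hj)) (hs j₀ (mem_insert_self _ _))
      ext x
      simp only [mem_NB, mem_erase]
      constructor
      · rintro ⟨⟨-, hxV⟩, hd⟩; exact ⟨hxV, hd⟩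
      · rintro ⟨hxV, hd⟩
        refine ⟨⟨?_, hxV⟩, hd⟩
        rintro rfl; exact hnd hd
    have hne : (slots j₀).Nonempty := ⟨s₀, hs j₀ (mem_insert_self _ _)⟩
    rw [hVsd, ih (V.erase j₀) hK'' (fun j hj => hs j (mem_insert_of_mem hj))]
    have herase : Zf slots P (V.erase j₀) = Zf slots P V + P * Zf slots P (NB slots V j₀) := by
      have h := Zf_erase slots P hj₀V hne
      linarith
    rw [herase, Finset.sum_insert hj₀]
    rw [Finset.sum_congr rfl (fun j hj => by rw [hNB j hj] : ∀ j ∈ K'', Zf slots P (NB slots (V.erase j₀) j) = Zf slots P (NB slots V j))]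
    ring


/-- Positivity of the independence polynomial plus the clique-removal ratio bound,
by simultaneous strong induction (Fernández–Procacci style). -/
lemma posZ (hP : 0 ≤ P) (hm : 0 < m) (hm1 : m < 1)
    (hsl : ∀ i ∈ T, (slots i).Nonempty)
    (hcrit : ∀ i ∈ T,
      P * ∏ s ∈ slots i, (1 + m * ((T.filter fun j => s ∈ slots j).card : ℝ)) ≤ m) :
    ∀ N : ℕ, ∀ V : Finset ι, V ⊆ T → V.card ≤ N →
      0 < Zf slots P V ∧
      ∀ s : S, Zf slots P (V.filter fun i => s ∉ slots i)
        ≤ (1 + m * ((V.filter fun i => s ∈ slots i).card : ℝ)) * Zf slots P V := by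
  intro N
  induction N with
  | zero =>
    intro V _ hc
    have hVe : V = ∅ := Finset.card_eq_zero.1 (Nat.le_zero.1 hc)
    subst hVe
    refine ⟨by rw [Zf_empty]; norm_num, fun s => ?_⟩
    simp only [Finset.filter_empty, Finset.card_empty, Nat.cast_zero, mul_zero, add_zero, one_mul]
    exact le_refl _
  | succ N ih =>
    intro V hVT hc
    -- chain lemma: repeated clique removals
    have chain : ∀ (ss : Finset S) (A : Finset ι), A ⊆ T → A.card ≤ N →
        Zf slots P (A.filter fun i => ∀ s ∈ ss, s ∉ slots i)
          ≤ (∏ s ∈ ss, (1 + m * ((T.filter fun j => s ∈ slots j).card : ℝ))) * Zf slots P A := by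
      intro ss
      induction ss using Finset.induction_on with
      | empty =>
        intro A hAT hA
        have h1 : (A.filter fun i => ∀ s ∈ (∅ : Finset S), s ∉ slots i) = A :=
          Finset.filter_true_of_mem (by simp)
        rw [h1, Finset.prod_empty, one_mul]
      | @insert s₀ ss' hs₀ ihss =>
        intro A hAT hA
        set A' := A.filter (fun i => ∀ s ∈ ss', s ∉ slots i) with hA'def
        have hsetdef : (A.filter fun i => ∀ s ∈ insert s₀ ss', s ∉ slots i)
            = A'.filter fun i => s₀ ∉ slots i := by
          ext i
          simp only [hA'def, Finset.mem_filter, Finset.mem_insert, and_assoc]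
          constructor
          · rintro ⟨hiA, hall⟩
            exact ⟨hiA, fun s hs => hall s (Or.inr hs), hall s₀ (Or.inl rfl)⟩
          · rintro ⟨hiA, hall, hs₀i⟩
            refine ⟨hiA, fun s hs => ?_⟩
            rcases hs with rfl | hs
            · exact hs₀i
            · exact hall s hs
        have hA'T : A' ⊆ T := (Finset.filter_subset _ _).trans hAT
        have hA'c : A'.card ≤ N := le_trans (Finset.card_le_card (Finset.filter_subset _ _)) hA
        obtain ⟨hZA'pos, hb⟩ := ih A' hA'T hA'c
        have h1 := hb s₀
        have hcard : ((A'.filter fun i => s₀ ∈ slots i).card : ℝ)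
            ≤ ((T.filter fun j => s₀ ∈ slots j).card : ℝ) := by
          exact_mod_cast Finset.card_le_card
            (fun x hx => Finset.mem_filter.2 ⟨hA'T (Finset.mem_filter.1 hx).1, (Finset.mem_filter.1 hx).2⟩)
        have hfac : (1 + m * ((A'.filter fun i => s₀ ∈ slots i).card : ℝ))
            ≤ (1 + m * ((T.filter fun j => s₀ ∈ slots j).card : ℝ)) := by
          have := mul_le_mul_of_nonneg_left hcard (le_of_lt hm)
          linarith
        have hfacpos : (0:ℝ) ≤ 1 + m * ((T.filter fun j => s₀ ∈ slots j).card : ℝ) := by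
          positivity
        have h2 : Zf slots P (A'.filter fun i => s₀ ∉ slots i)
            ≤ (1 + m * ((T.filter fun j => s₀ ∈ slots j).card : ℝ)) * Zf slots P A' := by
          calc Zf slots P (A'.filter fun i => s₀ ∉ slots i)
              ≤ (1 + m * ((A'.filter fun i => s₀ ∈ slots i).card : ℝ)) * Zf slots P A' := h1
            _ ≤ (1 + m * ((T.filter fun j => s₀ ∈ slots j).card : ℝ)) * Zf slots P A' :=
                mul_le_mul_of_nonneg_right hfac (le_of_lt hZA'pos)
        have h3 := ihss A hAT hA
        calc Zf slots P (A.filter fun i => ∀ s ∈ insert s₀ ss', s ∉ slots i)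
            = Zf slots P (A'.filter fun i => s₀ ∉ slots i) := by rw [hsetdef]
          _ ≤ (1 + m * ((T.filter fun j => s₀ ∈ slots j).card : ℝ)) * Zf slots P A' := h2
          _ ≤ (1 + m * ((T.filter fun j => s₀ ∈ slots j).card : ℝ))
              * ((∏ s ∈ ss', (1 + m * ((T.filter fun j => s ∈ slots j).card : ℝ))) * Zf slots P A) :=
                mul_le_mul_of_nonneg_left h3 hfacpos
          _ = (∏ s ∈ insert s₀ ss', (1 + m * ((T.filter fun j => s ∈ slots j).card : ℝ)))
              * Zf slots P A := by rw [Finset.prod_insert hs₀]; ring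
    -- part (a): positivity
    have parta : 0 < Zf slots P V := by
      rcases V.eq_empty_or_nonempty with rfl | ⟨j, hj⟩
      · rw [Zf_empty]; norm_num
      · have hjT : j ∈ T := hVT hj
        have hne : (slots j).Nonempty := hsl j hjT
        have hcE : (V.erase j).card ≤ N := by
          have := Finset.card_erase_of_mem hj
          omega
        have hErT : V.erase j ⊆ T := (Finset.erase_subset _ _).trans hVT
        obtain ⟨hZe, _⟩ := ih (V.erase j) hErT hcE
        have hNBset : NB slots V j = (V.erase j).filter fun i => ∀ s ∈ slots j, s ∉ slots i := by
          ext i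
          simp only [mem_NB, Finset.mem_filter, Finset.mem_erase]
          constructor
          · rintro ⟨hiV, hd⟩
            refine ⟨⟨?_, hiV⟩, fun s hs => Finset.disjoint_left.1 hd hs⟩
            rintro rfl
            exact hne.ne_empty (by simpa [Finset.bot_eq_empty] using disjoint_self.1 hd)
          · rintro ⟨⟨-, hiV⟩, hd⟩
            exact ⟨hiV, Finset.disjoint_left.2 hd⟩
        have hch : Zf slots P (NB slots V j)
            ≤ (∏ s ∈ slots j, (1 + m * ((T.filter fun i => s ∈ slots i).card : ℝ)))
              * Zf slots P (V.erase j) := by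
          rw [hNBset]; exact chain (slots j) (V.erase j) hErT hcE
        have hid := Zf_erase slots P hj hne
        have hcr := hcrit j hjT
        have hprodpos : (0:ℝ) ≤ ∏ s ∈ slots j, (1 + m * ((T.filter fun i => s ∈ slots i).card : ℝ)) := by
          apply Finset.prod_nonneg
          intro s _
          positivity
        have hPZ : P * Zf slots P (NB slots V j) ≤ m * Zf slots P (V.erase j) := by
          calc P * Zf slots P (NB slots V j)
              ≤ P * ((∏ s ∈ slots j, (1 + m * ((T.filter fun i => s ∈ slots i).card : ℝ)))
                  * Zf slots P (V.erase j)) := mul_le_mul_of_nonneg_left hch hP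
            _ = (P * ∏ s ∈ slots j, (1 + m * ((T.filter fun i => s ∈ slots i).card : ℝ)))
                  * Zf slots P (V.erase j) := by ring
            _ ≤ m * Zf slots P (V.erase j) := mul_le_mul_of_nonneg_right hcr (le_of_lt hZe)
        have : Zf slots P V ≥ (1 - m) * Zf slots P (V.erase j) := by
          rw [hid]; nlinarith [hZe]
        nlinarith [hZe]
    refine ⟨parta, fun s => ?_⟩
    -- part (b)
    set K' := V.filter (fun i => s ∈ slots i) with hK'def
    rcases K'.eq_empty_or_nonempty with hK'e | ⟨j₁, hj₁⟩
    · have h1 : (V.filter fun i => s ∉ slots i) = V := by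
        apply Finset.filter_true_of_mem
        intro i hi hsi
        have : i ∈ K' := Finset.mem_filter.2 ⟨hi, hsi⟩
        rw [hK'e] at this
        exact absurd this (Finset.notMem_empty i)
      rw [h1, hK'e]
      simp only [Finset.card_empty, Nat.cast_zero, mul_zero, add_zero, one_mul]
      exact le_refl _
    · have hXset : (V.filter fun i => s ∉ slots i) = V \ K' := by
        ext i
        simp only [hK'def, Finset.mem_filter, Finset.mem_sdiff]
        tauto
      have hK'V : K' ⊆ V := Finset.filter_subset _ _
      have hK'T : K' ⊆ T := hK'V.trans hVT
      have hsK' : ∀ j ∈ K', s ∈ slots j := fun j hj => (Finset.mem_filter.1 hj).2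
      have hid := Zf_sdiff_clique slots P K' V hK'V hsK'
      -- ambient for the chains
      have hXV : V \ K' ⊆ V := Finset.sdiff_subset
      have hXT : V \ K' ⊆ T := hXV.trans hVT
      have hXc : (V \ K').card ≤ N := by
        have hlt : (V \ K').card < V.card := by
          apply Finset.card_lt_card
          refine ⟨hXV, fun hsub => ?_⟩
          have : j₁ ∈ V \ K' := hsub (hK'V hj₁)
          exact (Finset.mem_sdiff.1 this).2 hj₁
        omega
      obtain ⟨hXpos, _⟩ := ih (V \ K') hXT hXc
      set cT := ((T.filter fun j => s ∈ slots j).card : ℝ) with hcTdef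
      have hK'leT : ((K').card : ℝ) ≤ cT := by
        rw [hcTdef]
        exact_mod_cast Finset.card_le_card
          (fun x hx => Finset.mem_filter.2 ⟨hK'T hx, hsK' x hx⟩)
      have hcTpos : (0:ℝ) ≤ cT := by rw [hcTdef]; positivity
      -- per-element bound
      have hper : ∀ j ∈ K', P * Zf slots P (NB slots V j) ≤ (m / (1 + m * cT)) * Zf slots P (V \ K') := by
        intro j hj
        have hjT : j ∈ T := hK'T hj
        have hsj : s ∈ slots j := hsK' j hj
        have hKmem : ∀ i : ι, i ∈ K' ↔ i ∈ V ∧ s ∈ slots i := fun i => by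
          rw [hK'def, Finset.mem_filter]
        have hNBset : NB slots V j
            = (V \ K').filter fun i => ∀ s' ∈ (slots j).erase s, s' ∉ slots i := by
          ext i
          simp only [mem_NB, Finset.mem_filter, Finset.mem_sdiff]
          constructor
          · rintro ⟨hiV, hd⟩
            have hsnot : s ∉ slots i := Finset.disjoint_left.1 hd hsj
            refine ⟨⟨hiV, fun hmem => hsnot ((hKmem i).1 hmem).2⟩,
              fun s' hs' => Finset.disjoint_left.1 hd (Finset.mem_erase.1 hs').2⟩
          · rintro ⟨⟨hiV, hiK⟩, hall⟩
            have hsnot : s ∉ slots i := fun hsi => hiK ((hKmem i).2 ⟨hiV, hsi⟩)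
            refine ⟨hiV, Finset.disjoint_left.2 fun s' hs' => ?_⟩
            rcases eq_or_ne s' s with rfl | hne'
            · exact hsnot
            · exact hall s' (Finset.mem_erase.2 ⟨hne', hs'⟩)
        have hch : Zf slots P (NB slots V j)
            ≤ (∏ s' ∈ (slots j).erase s, (1 + m * ((T.filter fun i => s' ∈ slots i).card : ℝ)))
              * Zf slots P (V \ K') := by
          rw [hNBset]
          exact chain ((slots j).erase s) (V \ K') hXT hXc
        have hsplit : (∏ s' ∈ slots j, (1 + m * ((T.filter fun i => s' ∈ slots i).card : ℝ)))
            = (1 + m * cT) * ∏ s' ∈ (slots j).erase s, (1 + m * ((T.filter fun i => s' ∈ slots i).card : ℝ)) := by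
          rw [hcTdef]
          exact (Finset.mul_prod_erase (slots j) _ hsj).symm
        have hcr := hcrit j hjT
        rw [hsplit] at hcr
        have h1cT : (0:ℝ) < 1 + m * cT := by nlinarith
        have hprodnn : (0:ℝ) ≤ ∏ s' ∈ (slots j).erase s, (1 + m * ((T.filter fun i => s' ∈ slots i).card : ℝ)) := by
          apply Finset.prod_nonneg
          intro s' _
          positivity
        have hP5 : P * (∏ s' ∈ (slots j).erase s, (1 + m * ((T.filter fun i => s' ∈ slots i).card : ℝ)))
            ≤ m / (1 + m * cT) := by
          rw [le_div_iff₀ h1cT]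
          nlinarith
        calc P * Zf slots P (NB slots V j)
            ≤ P * ((∏ s' ∈ (slots j).erase s, (1 + m * ((T.filter fun i => s' ∈ slots i).card : ℝ))) * Zf slots P (V \ K')) :=
              mul_le_mul_of_nonneg_left hch hP
          _ = (P * ∏ s' ∈ (slots j).erase s, (1 + m * ((T.filter fun i => s' ∈ slots i).card : ℝ))) * Zf slots P (V \ K') := by
              ring
          _ ≤ (m / (1 + m * cT)) * Zf slots P (V \ K') := mul_le_mul_of_nonneg_right hP5 (le_of_lt hXpos)
      -- assemble
      have hsum : P * ∑ j ∈ K', Zf slots P (NB slots V j)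
          ≤ ((K').card : ℝ) * ((m / (1 + m * cT)) * Zf slots P (V \ K')) := by
        rw [Finset.mul_sum]
        calc ∑ j ∈ K', P * Zf slots P (NB slots V j)
            ≤ ∑ _j ∈ K', (m / (1 + m * cT)) * Zf slots P (V \ K') := by
              refine Finset.sum_le_sum ?_
              intro j hj
              exact hper j hj
          _ = ((K').card : ℝ) * ((m / (1 + m * cT)) * Zf slots P (V \ K')) := by
              rw [Finset.sum_const, nsmul_eq_mul]
      have hXineq : Zf slots P (V \ K') ≤ Zf slots P V
          + ((K').card : ℝ) * ((m / (1 + m * cT)) * Zf slots P (V \ K')) := by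
        linarith [hsum, hid]
      rw [hXset]
      have keylemma : ∀ X ZV c cT' m' : ℝ, 0 < m' → 0 ≤ ZV → 0 ≤ c → c ≤ cT' →
          X ≤ ZV + c * ((m' / (1 + m' * cT')) * X) → X ≤ (1 + m' * c) * ZV := by
        intro X ZV c cT' m' hm' hZV hc hccT h
        have hd : (0:ℝ) < 1 + m' * cT' := by nlinarith
        have hd2 : (0:ℝ) < 1 + m' * cT' - m' * c := by nlinarith
        have h2 : X * (1 + m' * cT') ≤ ZV * (1 + m' * cT') + m' * c * X := by
          have h3 := mul_le_mul_of_nonneg_right h hd.le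
          have e : (ZV + c * ((m' / (1 + m' * cT')) * X)) * (1 + m' * cT')
              = ZV * (1 + m' * cT') + m' * c * X := by
            field_simp
          linarith [h3, e.le, e.ge]
        have h9 : (0:ℝ) ≤ ZV * (m' * c) * (m' * cT' - m' * c) :=
          mul_nonneg (mul_nonneg hZV (mul_nonneg hm'.le hc)) (by nlinarith)
        have h10 : X * (1 + m' * cT' - m' * c) ≤ ((1 + m' * c) * ZV) * (1 + m' * cT' - m' * c) := by
          nlinarith [h2, h9]
        exact le_of_mul_le_mul_right h10 hd2
      have hZVnn : (0:ℝ) ≤ Zf slots P V := le_of_lt parta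
      exact keylemma _ _ _ _ m hm hZVnn (by positivity) hK'leT hXineq


lemma Av_anti {V₁ V₂ : Finset ι} (h : V₁ ⊆ V₂) : Av E V₂ ⊆ Av E V₁ := by
  intro ω hω
  simp only [Av, Finset.mem_filter, Finset.mem_univ, true_and] at *
  exact fun j hj => hω j (h hj)

lemma claimS (hP : 0 ≤ P) (hm : 0 < m) (hm1 : m < 1)
    (hsl : ∀ i ∈ T, (slots i).Nonempty)
    (hcrit : ∀ i ∈ T,
      P * ∏ s ∈ slots i, (1 + m * ((T.filter fun j => s ∈ slots j).card : ℝ)) ≤ m)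
    (hlop : ∀ i ∈ T, ∀ Y ⊆ T, (∀ j ∈ Y, Disjoint (slots i) (slots j)) →
      ((E i ∩ Av E Y).card : ℝ) ≤ P * Wf E Y) :
    ∀ NN : ℕ, ∀ U : Finset ι, U ⊆ T → U.card ≤ NN → ∀ i ∈ U,
      Wf E (U.erase i) * Zf slots P U ≤ Wf E U * Zf slots P (U.erase i) := by
  intro NN
  induction NN with
  | zero =>
    intro U _ hc i hi
    rw [Finset.card_eq_zero.1 (Nat.le_zero.1 hc)] at hi
    exact absurd hi (Finset.notMem_empty i)
  | succ NN ih =>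
    intro U hUT hc i hi
    have chainW : ∀ (B A : Finset ι), A ⊆ T → A.card ≤ NN → B ⊆ A →
        Wf E (A \ B) * Zf slots P A ≤ Wf E A * Zf slots P (A \ B) := by
      intro B
      induction B using Finset.induction_on with
      | empty =>
        intro A _ _ _
        rw [Finset.sdiff_empty]
      | @insert j B' hj ihB =>
        intro A hAT hAc hBA
        have hjA : j ∈ A := hBA (Finset.mem_insert_self _ _)
        have hB'A : B' ⊆ A := fun x hx => hBA (Finset.mem_insert_of_mem hx)
        have hsd : A \ insert j B' = (A \ B').erase j := by
          ext x
          simp only [Finset.mem_sdiff, Finset.mem_erase, Finset.mem_insert]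
          tauto
        have hjAB' : j ∈ A \ B' := Finset.mem_sdiff.2 ⟨hjA, hj⟩
        have hABT : A \ B' ⊆ T := Finset.sdiff_subset.trans hAT
        have hABc : (A \ B').card ≤ NN := le_trans (Finset.card_le_card Finset.sdiff_subset) hAc
        have h1 := ih (A \ B') hABT hABc j hjAB'
        have h2 := ihB A hAT hAc hB'A
        have hZAB' : 0 < Zf slots P (A \ B') :=
          (posZ slots T P m hP hm hm1 hsl hcrit (A \ B').card (A \ B') hABT (le_refl _)).1
        have hZej : 0 < Zf slots P ((A \ B').erase j) :=
          (posZ slots T P m hP hm hm1 hsl hcrit _ _ ((Finset.erase_subset _ _).trans hABT) (le_refl _)).1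
        have hZA : 0 < Zf slots P A :=
          (posZ slots T P m hP hm hm1 hsl hcrit _ _ hAT (le_refl _)).1
        rw [hsd]
        have hmul1 := mul_le_mul_of_nonneg_right h1 (le_of_lt hZA)
        have hmul2 := mul_le_mul_of_nonneg_right h2 (le_of_lt hZej)
        have hkey : (Wf E ((A \ B').erase j) * Zf slots P A) * Zf slots P (A \ B')
            ≤ (Wf E A * Zf slots P ((A \ B').erase j)) * Zf slots P (A \ B') := by
          nlinarith [hmul1, hmul2]
        exact le_of_mul_le_mul_right hkey hZAB'
    -- main step
    have hiT : i ∈ T := hUT hi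
    have hne : (slots i).Nonempty := hsl i hiT
    have hNBerase : NB slots U i ⊆ U.erase i := by
      intro x hx
      obtain ⟨hxU, hd⟩ := (mem_NB slots).1 hx
      refine Finset.mem_erase.2 ⟨?_, hxU⟩
      rintro rfl
      exact hne.ne_empty (by simpa [Finset.bot_eq_empty] using disjoint_self.1 hd)
    have hNBT : NB slots U i ⊆ T := (NB_subset slots).trans hUT
    have hWer : Wf E (U.erase i) ≤ Wf E U + P * Wf E (NB slots U i) := by
      have hsubU : Av E (U.erase i) ⊆ Av E U ∪ (E i ∩ Av E (NB slots U i)) := by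
        intro ω hω
        have hω' : ∀ j ∈ U.erase i, ω ∉ E j := by
          have := (Finset.mem_filter.1 hω).2
          exact this
        by_cases hE : ω ∈ E i
        · refine Finset.mem_union_right _ (Finset.mem_inter.2 ⟨hE, ?_⟩)
          exact Av_anti E hNBerase hω
        · refine Finset.mem_union_left _ ?_
          simp only [Av, Finset.mem_filter, Finset.mem_univ, true_and]
          intro j hj
          rcases eq_or_ne j i with rfl | hji
          · exact hE
          · exact hω' j (Finset.mem_erase.2 ⟨hji, hj⟩)
      have hcard : (Av E (U.erase i)).card ≤ (Av E U).card + (E i ∩ Av E (NB slots U i)).card :=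
        le_trans (Finset.card_le_card hsubU) (Finset.card_union_le _ _)
      have hlop' := hlop i hiT (NB slots U i) hNBT (fun j hj => ((mem_NB slots).1 hj).2)
      have hcast : Wf E (U.erase i) ≤ Wf E U + ((E i ∩ Av E (NB slots U i)).card : ℝ) := by
        rw [Wf, Wf]
        exact_mod_cast hcard
      linarith [hcast, hlop']
    have hErT : U.erase i ⊆ T := (Finset.erase_subset _ _).trans hUT
    have hErc : (U.erase i).card ≤ NN := by
      have := Finset.card_erase_of_mem hi
      omega
    have hchW : Wf E (NB slots U i) * Zf slots P (U.erase i)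
        ≤ Wf E (U.erase i) * Zf slots P (NB slots U i) := by
      have hB : NB slots U i = (U.erase i) \ ((U.erase i) \ NB slots U i) := by
        rw [Finset.sdiff_sdiff_self_left]
        exact (Finset.inter_eq_right.2 hNBerase).symm
      have := chainW ((U.erase i) \ NB slots U i) (U.erase i) hErT hErc Finset.sdiff_subset
      rw [← hB] at this
      exact this
    have hid := Zf_erase slots P hi hne
    have hZer : 0 < Zf slots P (U.erase i) :=
      (posZ slots T P m hP hm hm1 hsl hcrit _ _ hErT (le_refl _)).1
    rw [hid]
    have hA := mul_le_mul_of_nonneg_right hWer (le_of_lt hZer)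
    have hB := mul_le_mul_of_nonneg_left hchW hP
    nlinarith [hA, hB]

lemma W_ge (hP : 0 ≤ P) (hm : 0 < m) (hm1 : m < 1)
    (hsl : ∀ i ∈ T, (slots i).Nonempty)
    (hcrit : ∀ i ∈ T,
      P * ∏ s ∈ slots i, (1 + m * ((T.filter fun j => s ∈ slots j).card : ℝ)) ≤ m)
    (hlop : ∀ i ∈ T, ∀ Y ⊆ T, (∀ j ∈ Y, Disjoint (slots i) (slots j)) →
      ((E i ∩ Av E Y).card : ℝ) ≤ P * Wf E Y) :
    ∀ V : Finset ι, V ⊆ T → Zf slots P V * Wf E ∅ ≤ Wf E V := by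
  intro V
  induction V using Finset.induction_on with
  | empty =>
    intro _
    rw [Zf_empty, one_mul]
  | @insert i V' hi ihV =>
    intro hVT
    have hV'T : V' ⊆ T := fun x hx => hVT (Finset.mem_insert_of_mem hx)
    have h1 := claimS E slots T P m hP hm hm1 hsl hcrit hlop (insert i V').card
      (insert i V') hVT (le_refl _) i (Finset.mem_insert_self _ _)
    rw [Finset.erase_insert hi] at h1
    have hZV' : 0 < Zf slots P V' :=
      (posZ slots T P m hP hm hm1 hsl hcrit _ _ hV'T (le_refl _)).1
    have hZU : 0 < Zf slots P (insert i V') :=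
      (posZ slots T P m hP hm hm1 hsl hcrit _ _ hVT (le_refl _)).1
    have ih2 := ihV hV'T
    have c1 : (Zf slots P (insert i V') * Wf E ∅) * Zf slots P V'
        ≤ (Wf E (insert i V')) * Zf slots P V' := by
      nlinarith [mul_le_mul_of_nonneg_left ih2 (le_of_lt hZU), h1]
    exact le_of_mul_le_mul_right c1 hZV'

theorem core [Nonempty Ω] (hP : 0 ≤ P) (hm : 0 < m) (hm1 : m < 1)
    (hsl : ∀ i ∈ T, (slots i).Nonempty)
    (hcrit : ∀ i ∈ T,
      P * ∏ s ∈ slots i, (1 + m * ((T.filter fun j => s ∈ slots j).card : ℝ)) ≤ m)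
    (hlop : ∀ i ∈ T, ∀ Y ⊆ T, (∀ j ∈ Y, Disjoint (slots i) (slots j)) →
      ((E i ∩ Av E Y).card : ℝ) ≤ P * Wf E Y) :
    ∃ ω : Ω, ∀ i ∈ T, ω ∉ E i := by
  have h := W_ge E slots T P m hP hm hm1 hsl hcrit hlop T (subset_refl T)
  have hZ : 0 < Zf slots P T :=
    (posZ slots T P m hP hm hm1 hsl hcrit _ _ (subset_refl T) (le_refl _)).1
  have hW0 : Wf E (∅ : Finset ι) = (Fintype.card Ω : ℝ) := by
    rw [Wf]
    congr 1
    rw [← Finset.card_univ]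
    congr 1
    apply Finset.filter_true_of_mem
    intro ω _
    intro j hj
    exact absurd hj (Finset.notMem_empty j)
  have hWT : 0 < Wf E T := by
    have hc : (0:ℝ) < (Fintype.card Ω : ℝ) := by
      exact_mod_cast Fintype.card_pos
    nlinarith [h, hZ, hc]
  have hcard : 0 < (Av E T).card := by
    rw [Wf] at hWT
    exact_mod_cast hWT
  obtain ⟨ω, hω⟩ := Finset.card_pos.1 hcard
  refine ⟨ω, ?_⟩
  have := (Finset.mem_filter.1 hω).2
  exact this

end



section Swap
variable {α : Type*} [DecidableEq α]

/-- a permutation moving `a ↦ a'`, `u ↦ u'`, `v ↦ v'`, supported on these six points. -/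
def tswap (a u v a' u' v' : α) : Equiv.Perm α :=
  ((Equiv.swap a a').trans (Equiv.swap ((Equiv.swap a a') u) u')).trans
    (Equiv.swap ((Equiv.swap ((Equiv.swap a a') u) u') ((Equiv.swap a a') v)) v')

variable {a u v a' u' v' : α}

lemma tswap_apply (c : α) :
    tswap a u v a' u' v' c
      = (Equiv.swap ((Equiv.swap ((Equiv.swap a a') u) u') ((Equiv.swap a a') v)) v')
        ((Equiv.swap ((Equiv.swap a a') u) u') ((Equiv.swap a a') c)) := rfl

lemma tswap_maps (hau : a ≠ u) (hav : a ≠ v) (huv : u ≠ v)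
    (hau' : a' ≠ u') (hav' : a' ≠ v') (huv' : u' ≠ v') :
    tswap a u v a' u' v' a = a' ∧ tswap a u v a' u' v' u = u' ∧ tswap a u v a' u' v' v = v' := by
  set S₁ := Equiv.swap a a' with hS₁
  set S₂ := Equiv.swap (S₁ u) u' with hS₂
  set S₃ := Equiv.swap (S₂ (S₁ v)) v' with hS₃
  have hS₁a : S₁ a = a' := Equiv.swap_apply_left _ _
  have hS₂a' : S₂ a' = a' := by
    apply Equiv.swap_apply_of_ne_of_ne
    · intro h
      exact hau (S₁.injective (by rw [hS₁a, h]))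
    · exact hau'
  have hS₂S₁u : S₂ (S₁ u) = u' := Equiv.swap_apply_left _ _
  refine ⟨?_, ?_, ?_⟩
  · rw [tswap_apply, ← hS₁, ← hS₂, ← hS₃, hS₁a, hS₂a']
    apply Equiv.swap_apply_of_ne_of_ne
    · intro h
      have : S₂ (S₁ v) = S₂ a' := by rw [← h, hS₂a']
      have hv : S₁ v = a' := S₂.injective this
      exact hav (S₁.injective (by rw [hS₁a, hv]))
    · exact hav'
  · rw [tswap_apply, ← hS₁, ← hS₂, ← hS₃, hS₂S₁u]
    apply Equiv.swap_apply_of_ne_of_ne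
    · intro h
      have : S₁ v = S₁ u := S₂.injective (by rw [← h, hS₂S₁u])
      exact huv (S₁.injective this).symm
    · exact huv'
  · rw [tswap_apply, ← hS₁, ← hS₂, ← hS₃]
    exact Equiv.swap_apply_left _ _

lemma tswap_fixes (hau : a ≠ u) (hav : a ≠ v)
    {c : α} (h1 : c ≠ a) (h2 : c ≠ u) (h3 : c ≠ v) (h4 : c ≠ a') (h5 : c ≠ u') (h6 : c ≠ v') :
    tswap a u v a' u' v' c = c := by
  set S₁ := Equiv.swap a a' with hS₁
  set S₂ := Equiv.swap (S₁ u) u' with hS₂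
  have hS1u : S₁ u = a ∨ S₁ u = u := by
    rcases eq_or_ne u a' with h | h
    · left; rw [h, hS₁]; exact Equiv.swap_apply_right _ _
    · right; rw [hS₁]; exact Equiv.swap_apply_of_ne_of_ne hau.symm h
  have hS1v : S₁ v = a ∨ S₁ v = v := by
    rcases eq_or_ne v a' with h | h
    · left; rw [h, hS₁]; exact Equiv.swap_apply_right _ _
    · right; rw [hS₁]; exact Equiv.swap_apply_of_ne_of_ne hav.symm h
  have hS2S1v : S₂ (S₁ v) = u' ∨ S₂ (S₁ v) = S₁ u ∨ S₂ (S₁ v) = S₁ v := by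
    by_cases h1' : S₁ v = S₁ u
    · left; rw [h1', hS₂]; exact Equiv.swap_apply_left _ _
    · by_cases h2' : S₁ v = u'
      · right; left; rw [h2', hS₂]; exact Equiv.swap_apply_right _ _
      · right; right; rw [hS₂]; exact Equiv.swap_apply_of_ne_of_ne h1' h2'
  have hcS1u : c ≠ S₁ u := by
    rcases hS1u with h | h <;> rw [h] <;> assumption
  have hcS2S1v : c ≠ S₂ (S₁ v) := by
    rcases hS2S1v with h | h | h
    · rw [h]; exact h5
    · rw [h]; exact hcS1u
    · rw [h]; rcases hS1v with h' | h' <;> rw [h'] <;> assumption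
  rw [tswap_apply, ← hS₁, ← hS₂]
  rw [show S₁ c = c from Equiv.swap_apply_of_ne_of_ne h1 h4]
  rw [show S₂ c = c from Equiv.swap_apply_of_ne_of_ne hcS1u h5]
  exact Equiv.swap_apply_of_ne_of_ne hcS2S1v h6

/-- if `tswap` moves a point outside `{a,u,v}`, its image lands in `{a,u,v}`. -/
lemma tswap_moved (hau : a ≠ u) (hav : a ≠ v) (huv : u ≠ v)
    (hau' : a' ≠ u') (hav' : a' ≠ v') (huv' : u' ≠ v')
    {c : α} (hmove : tswap a u v a' u' v' c ≠ c)
    (h1 : c ≠ a) (h2 : c ≠ u) (h3 : c ≠ v) :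
    tswap a u v a' u' v' c = a ∨ tswap a u v a' u' v' c = u ∨ tswap a u v a' u' v' c = v := by
  obtain ⟨hRa, hRu, hRv⟩ := tswap_maps hau hav huv hau' hav' huv' (a := a) (u := u) (v := v)
    (a' := a') (u' := u') (v' := v')
  set R := tswap a u v a' u' v' with hR
  -- c is in the support
  have hc6 : c = a' ∨ c = u' ∨ c = v' := by
    by_contra hcon
    push_neg at hcon
    exact hmove (tswap_fixes hau hav h1 h2 h3 hcon.1 hcon.2.1 hcon.2.2)
  by_contra hcon
  push_neg at hcon
  obtain ⟨hd1, hd2, hd3⟩ := hcon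
  set d := R c with hd
  have hdc : d ≠ c := hmove
  -- d is in the support as well
  have hd6 : d = a' ∨ d = u' ∨ d = v' := by
    by_contra hcon2
    push_neg at hcon2
    have hfix : R d = d := tswap_fixes hau hav hd1 hd2 hd3 hcon2.1 hcon2.2.1 hcon2.2.2
    have : R c = R d := by rw [hfix, ← hd]
    exact hdc (R.injective this).symm
  rcases hd6 with h | h | h
  · exact h1 (R.injective (by rw [← hd, h, hRa]) : c = a)
  · exact h2 (R.injective (by rw [← hd, h, hRu]) : c = u)
  · exact h3 (R.injective (by rw [← hd, h, hRv]) : c = v)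

end Swap


section App

attribute [local instance] Classical.propDecidable

variable {n : ℕ} {C : Type*}

abbrev Idx (n : ℕ) := (Fin n × Fin n × Fin n) × (Fin n × Fin n × Fin n)

noncomputable def slotsA : Idx n → Finset (Fin n ⊕ Fin n) := fun i =>
  {Sum.inl i.1.1, Sum.inl i.1.2.1, Sum.inl i.1.2.2, Sum.inr i.2.1, Sum.inr i.2.2.1, Sum.inr i.2.2.2}

noncomputable def EA : Idx n → Finset (Equiv.Perm (Fin n)) := fun i =>
  univ.filter fun σ => σ i.1.1 = i.2.1 ∧ σ i.1.2.1 = i.2.2.1 ∧ σ i.1.2.2 = i.2.2.2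

noncomputable def Tch (G : SimpleGraph (Fin n)) : Finset (Fin n × Fin n × Fin n) :=
  univ.filter fun c => G.Adj c.1 c.2.1 ∧ G.Adj c.1 c.2.2 ∧ c.2.1 < c.2.2

noncomputable def Tas (χ : Sym2 (Fin n) → C) : Finset (Fin n × Fin n × Fin n) :=
  univ.filter fun t => t.1 ≠ t.2.1 ∧ t.1 ≠ t.2.2 ∧ t.2.1 ≠ t.2.2 ∧ χ s(t.1, t.2.1) = χ s(t.1, t.2.2)

noncomputable def TA (G : SimpleGraph (Fin n)) (χ : Sym2 (Fin n) → C) : Finset (Idx n) :=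
  Tch G ×ˢ Tas χ

lemma descFac3 (n : ℕ) : n.descFactorial 3 = n * (n - 1) * (n - 2) := by
  show (n - 2) * ((n-1) * ((n - 0) * 1)) = _
  simp only [Nat.sub_zero, mul_one]
  ring

lemma lopA_nat (G : SimpleGraph (Fin n)) (χ : Sym2 (Fin n) → C)
    (i : Idx n) (hi : i ∈ TA G χ) (Y : Finset (Idx n))
    (hfar : ∀ j ∈ Y, Disjoint (slotsA i) (slotsA j)) :
    ((EA i ∩ Av EA Y).card) * (n * (n - 1) * (n - 2)) ≤ (Av (EA (n := n)) Y).card := by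
  obtain ⟨⟨x, y, z⟩, a, u, v⟩ := i
  rw [TA, Finset.mem_product] at hi
  obtain ⟨hch, has⟩ := hi
  rw [Tch, Finset.mem_filter] at hch
  rw [Tas, Finset.mem_filter] at has
  obtain ⟨-, hA1, hA2, hyz'⟩ := hch
  obtain ⟨-, hau, hav, huv, -⟩ := has
  have hxy : x ≠ y := hA1.ne
  have hxz : x ≠ z := hA2.ne
  have hyz : y ≠ z := ne_of_lt hyz'
  set i₀ : Idx n := ((x, y, z), (a, u, v)) with hi₀
  set D := (EA i₀ ∩ Av EA Y) ×ˢ (univ : Finset (Fin 3 ↪ Fin n)) with hD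
  set F : Equiv.Perm (Fin n) × (Fin 3 ↪ Fin n) → Equiv.Perm (Fin n) :=
    fun p => p.1.trans (tswap a u v (p.2 0) (p.2 1) (p.2 2)) with hF
  -- basic facts for members of D
  have hmemD : ∀ p : Equiv.Perm (Fin n) × (Fin 3 ↪ Fin n), p ∈ D →
      (p.1 x = a ∧ p.1 y = u ∧ p.1 z = v) ∧ (∀ j ∈ Y, p.1 ∉ EA j) := by
    intro p hp
    rw [hD, Finset.mem_product] at hp
    obtain ⟨hp1, -⟩ := hp
    rw [Finset.mem_inter] at hp1
    constructor
    · have := hp1.1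
      rw [EA, Finset.mem_filter] at this
      exact this.2
    · have := hp1.2
      simp only [Av, Finset.mem_filter] at this
      exact this.2
  have htd : ∀ t : Fin 3 ↪ Fin n, t 0 ≠ t 1 ∧ t 0 ≠ t 2 ∧ t 1 ≠ t 2 := by
    intro t
    refine ⟨fun h => ?_, fun h => ?_, fun h => ?_⟩ <;>
      · have := t.injective h
        simp_all
  -- pattern of images
  have hpattern : ∀ p ∈ D, (F p) x = p.2 0 ∧ (F p) y = p.2 1 ∧ (F p) z = p.2 2 := by
    intro p hp
    obtain ⟨⟨hpx, hpy, hpz⟩, -⟩ := hmemD p hp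
    obtain ⟨h01, h02, h12⟩ := htd p.2
    obtain ⟨hRa, hRu, hRv⟩ := tswap_maps hau hav huv h01 h02 h12
      (a := a) (u := u) (v := v) (a' := p.2 0) (u' := p.2 1) (v' := p.2 2)
    refine ⟨?_, ?_, ?_⟩ <;> simp only [hF, Equiv.trans_apply, hpx, hpy, hpz] <;>
      [exact hRa; exact hRu; exact hRv]
  -- images avoid all events of Y
  have hmaps : ∀ p ∈ D, F p ∈ Av (EA (n := n)) Y := by
    intro p hp
    obtain ⟨⟨hpx, hpy, hpz⟩, hAv⟩ := hmemD p hp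
    obtain ⟨h01, h02, h12⟩ := htd p.2
    simp only [Av, Finset.mem_filter]
    refine ⟨Finset.mem_univ _, ?_⟩
    intro j hj
    obtain ⟨⟨xj, yj, zj⟩, aj, uj, vj⟩ := j
    have hd := (hfar _ hj)
    have hPos : ∀ w : Fin n,
        (Sum.inl w : Fin n ⊕ Fin n) ∈ slotsA (((xj,yj,zj),(aj,uj,vj)) : Idx n) →
        w ≠ x ∧ w ≠ y ∧ w ≠ z := by
      intro w hw
      have hni : (Sum.inl w : Fin n ⊕ Fin n) ∉ slotsA i₀ := Finset.disjoint_right.1 hd hw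
      rw [hi₀, slotsA] at hni
      simp only [Finset.mem_insert, Finset.mem_singleton] at hni
      push_neg at hni
      refine ⟨fun h => hni.1 (by rw [h]), fun h => hni.2.1 (by rw [h]),
        fun h => hni.2.2.1 (by rw [h])⟩
    have hVal : ∀ b : Fin n,
        (Sum.inr b : Fin n ⊕ Fin n) ∈ slotsA (((xj,yj,zj),(aj,uj,vj)) : Idx n) →
        b ≠ a ∧ b ≠ u ∧ b ≠ v := by
      intro b hb
      have hni : (Sum.inr b : Fin n ⊕ Fin n) ∉ slotsA i₀ := Finset.disjoint_right.1 hd hb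
      rw [hi₀, slotsA] at hni
      simp only [Finset.mem_insert, Finset.mem_singleton] at hni
      push_neg at hni
      refine ⟨fun h => hni.2.2.2.1 (by rw [h]), fun h => hni.2.2.2.2.1 (by rw [h]),
        fun h => hni.2.2.2.2.2 (by rw [h])⟩
    have hxjm := hPos xj (by rw [slotsA]; simp)
    have hyjm := hPos yj (by rw [slotsA]; simp)
    have hzjm := hPos zj (by rw [slotsA]; simp)
    have hajm := hVal aj (by rw [slotsA]; simp)
    have hujm := hVal uj (by rw [slotsA]; simp)
    have hvjm := hVal vj (by rw [slotsA]; simp)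
    -- coordinate transfer
    have hcoord : ∀ w b : Fin n, w ≠ x → w ≠ y → w ≠ z → b ≠ a → b ≠ u → b ≠ v →
        (F p) w = b → p.1 w = b := by
      intro w b hw1 hw2 hw3 hb1 hb2 hb3 hτ
      rw [hF] at hτ
      simp only [Equiv.trans_apply] at hτ
      by_cases hm : tswap a u v (p.2 0) (p.2 1) (p.2 2) (p.1 w) = p.1 w
      · rw [hm] at hτ; exact hτ
      · have hσw1 : p.1 w ≠ a := fun h => hw1 (p.1.injective (h.trans hpx.symm))
        have hσw2 : p.1 w ≠ u := fun h => hw2 (p.1.injective (h.trans hpy.symm))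
        have hσw3 : p.1 w ≠ v := fun h => hw3 (p.1.injective (h.trans hpz.symm))
        rcases tswap_moved hau hav huv h01 h02 h12 hm hσw1 hσw2 hσw3 with h | h | h <;>
          rw [hτ] at h
        · exact absurd h hb1
        · exact absurd h hb2
        · exact absurd h hb3
    intro hFE
    rw [EA, Finset.mem_filter] at hFE
    obtain ⟨-, hc1, hc2, hc3⟩ := hFE
    have hσE : p.1 ∈ EA (((xj,yj,zj),(aj,uj,vj)) : Idx n) := by
      rw [EA, Finset.mem_filter]
      exact ⟨Finset.mem_univ _,
        hcoord xj aj hxjm.1 hxjm.2.1 hxjm.2.2 hajm.1 hajm.2.1 hajm.2.2 hc1,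
        hcoord yj uj hyjm.1 hyjm.2.1 hyjm.2.2 hujm.1 hujm.2.1 hujm.2.2 hc2,
        hcoord zj vj hzjm.1 hzjm.2.1 hzjm.2.2 hvjm.1 hvjm.2.1 hvjm.2.2 hc3⟩
    exact hAv _ hj hσE
  -- injectivity
  have hinj : Set.InjOn F (D : Set (Equiv.Perm (Fin n) × (Fin 3 ↪ Fin n))) := by
    intro p1 hp1 p2 hp2 heq
    have hpat1 := hpattern p1 (by exact_mod_cast hp1)
    have hpat2 := hpattern p2 (by exact_mod_cast hp2)
    have ht : p1.2 = p2.2 := by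
      apply Function.Embedding.ext
      intro w
      fin_cases w
      · show p1.2 0 = p2.2 0
        rw [show p1.2 0 = (F p1) x from hpat1.1.symm, heq, hpat2.1]
      · show p1.2 1 = p2.2 1
        rw [show p1.2 1 = (F p1) y from hpat1.2.1.symm, heq, hpat2.2.1]
      · show p1.2 2 = p2.2 2
        rw [show p1.2 2 = (F p1) z from hpat1.2.2.symm, heq, hpat2.2.2]
    have hσ : p1.1 = p2.1 := by
      apply Equiv.ext
      intro w
      have hw := Equiv.ext_iff.1 heq w
      rw [hF] at hw
      simp only [Equiv.trans_apply] at hw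
      rw [ht] at hw
      exact (tswap a u v (p2.2 0) (p2.2 1) (p2.2 2)).injective hw
    exact Prod.ext hσ ht
  have hcard := Finset.card_le_card_of_injOn F hmaps hinj
  rw [hD, Finset.card_product] at hcard
  have hemb : (univ : Finset (Fin 3 ↪ Fin n)).card = n * (n - 1) * (n - 2) := by
    rw [Finset.card_univ, Fintype.card_embedding_eq, Fintype.card_fin, Fintype.card_fin, descFac3]
  rw [hemb] at hcard
  exact hcard


-- ### Counting lemmas

lemma class_card (χ : Sym2 (Fin n) → C) (k : ℕ)
    (hχ : ∀ (v : Fin n) (c : C), {u : Fin n | u ≠ v ∧ χ s(v, u) = c}.ncard ≤ k)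
    (a w₀ : Fin n) :
    (univ.filter fun w : Fin n => w ≠ a ∧ χ s(a, w) = χ s(a, w₀)).card ≤ k := by
  have h := hχ a (χ s(a, w₀))
  rwa [Set.ncard_eq_toFinset_card', Set.toFinset_setOf] at h

lemma proj_bound {β : Type*} [DecidableEq β] (s : Finset (Fin n × Fin n × Fin n)) (f : (Fin n × Fin n × Fin n) → β)
    (I : Finset β) (k : ℕ) (himg : ∀ t ∈ s, f t ∈ I)
    (hfib : ∀ b : β, ((s.filter fun t => f t = b)).card ≤ k) :
    s.card ≤ I.card * k := by
  calc s.card ≤ k * ((s.image f)).card :=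
        Finset.card_le_mul_card_image s k (fun b _ => hfib b)
    _ ≤ k * I.card := Nat.mul_le_mul_left k (Finset.card_le_card (Finset.image_subset_iff.2 himg))
    _ = I.card * k := Nat.mul_comm _ _

lemma Tas_card (χ : Sym2 (Fin n) → C) (k : ℕ)
    (hχ : ∀ (v : Fin n) (c : C), {u : Fin n | u ≠ v ∧ χ s(v, u) = c}.ncard ≤ k) :
    (Tas χ).card ≤ (n * n - n) * k := by
  have h := proj_bound (Tas χ) (fun t => (t.1, t.2.1)) (univ : Finset (Fin n)).offDiag k
    ?_ ?_
  · calc (Tas χ).card ≤ (univ : Finset (Fin n)).offDiag.card * k := h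
      _ = (n * n - n) * k := by
          rw [Finset.offDiag_card]
          simp [Finset.card_univ]
  · rintro ⟨a, u, v⟩ ht
    rw [Tas, Finset.mem_filter] at ht
    exact Finset.mem_offDiag.2 ⟨Finset.mem_univ _, Finset.mem_univ _, ht.2.1⟩
  · rintro ⟨a₀, u₀⟩
    refine le_trans (Finset.card_le_card_of_injOn (fun t => t.2.2) ?_ ?_)
      (class_card χ k hχ a₀ u₀)
    · rintro ⟨a, u, v⟩ ht
      rw [Finset.mem_coe, Finset.mem_filter, Tas, Finset.mem_filter] at ht
      obtain ⟨⟨-, h1, h2, h3, h4⟩, heq⟩ := ht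
      obtain ⟨rfl, rfl⟩ := Prod.mk.injEq .. ▸ (by exact Prod.ext_iff.1 heq : a = a₀ ∧ u = u₀)
      exact Finset.mem_filter.2 ⟨Finset.mem_univ _, fun hh => h2 hh.symm, h4.symm⟩
    · rintro ⟨a, u, v⟩ ht ⟨a', u', v'⟩ ht' hvv
      simp only [Finset.coe_filter, Set.mem_setOf_eq] at ht ht'
      have e1 : a = a₀ ∧ u = u₀ := Prod.ext_iff.1 ht.2
      have e2 : a' = a₀ ∧ u' = u₀ := Prod.ext_iff.1 ht'.2
      simp only at hvv
      simp [Prod.ext_iff, e1.1, e1.2, e2.1, e2.2, hvv]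

lemma Tas_val_card (χ : Sym2 (Fin n) → C) (k : ℕ)
    (hχ : ∀ (v : Fin n) (c : C), {u : Fin n | u ≠ v ∧ χ s(v, u) = c}.ncard ≤ k)
    (b : Fin n) :
    ((Tas χ).filter fun t => b = t.1 ∨ b = t.2.1 ∨ b = t.2.2).card ≤ 3 * ((n - 1) * k) := by
  have hsub : ((Tas χ).filter fun t => b = t.1 ∨ b = t.2.1 ∨ b = t.2.2)
      ⊆ ((Tas χ).filter fun t => b = t.1) ∪ (((Tas χ).filter fun t => b = t.2.1)
        ∪ ((Tas χ).filter fun t => b = t.2.2)) := by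
    intro t ht
    rw [Finset.mem_filter] at ht
    rcases ht.2 with h | h | h
    · exact Finset.mem_union_left _ (Finset.mem_filter.2 ⟨ht.1, h⟩)
    · exact Finset.mem_union_right _ (Finset.mem_union_left _ (Finset.mem_filter.2 ⟨ht.1, h⟩))
    · exact Finset.mem_union_right _ (Finset.mem_union_right _ (Finset.mem_filter.2 ⟨ht.1, h⟩))
  have hcA : ((Tas χ).filter fun t => b = t.1).card ≤ (n - 1) * k := by
    have := proj_bound ((Tas χ).filter fun t => b = t.1) (fun t => t.2.1) (univ.erase b) k ?_ ?_
    · calc _ ≤ (univ.erase b).card * k := this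
        _ = (n - 1) * k := by rw [Finset.card_erase_of_mem (Finset.mem_univ b), Finset.card_univ,
            Fintype.card_fin]
    · rintro ⟨a, u, v⟩ ht
      rw [Finset.mem_filter, Tas, Finset.mem_filter] at ht
      obtain ⟨⟨-, h1, h2, h3, h4⟩, rfl⟩ := ht
      exact Finset.mem_erase.2 ⟨fun hh => h1 hh.symm, Finset.mem_univ _⟩
    · intro u₀
      refine le_trans (Finset.card_le_card_of_injOn (fun t => t.2.2) ?_ ?_)
        (class_card χ k hχ b u₀)
      · rintro ⟨a, u, v⟩ ht
        simp only [Finset.mem_coe, Finset.mem_filter, Tas] at ht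
        obtain ⟨⟨⟨-, h1, h2, h3, h4⟩, rfl⟩, rfl⟩ := ht
        exact Finset.mem_filter.2 ⟨Finset.mem_univ _, fun hh => h2 hh.symm, h4.symm⟩
      · rintro ⟨a, u, v⟩ ht ⟨a', u', v'⟩ ht' hvv
        simp only [Finset.coe_filter, Set.mem_setOf_eq, Finset.mem_filter] at ht ht'
        simp only at hvv
        simp [Prod.ext_iff, ht.1.2.symm, ht'.1.2.symm, ht.2, ht'.2, hvv]
  have hcB : ((Tas χ).filter fun t => b = t.2.1).card ≤ (n - 1) * k := by
    have := proj_bound ((Tas χ).filter fun t => b = t.2.1) (fun t => t.1) (univ.erase b) k ?_ ?_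
    · calc _ ≤ (univ.erase b).card * k := this
        _ = (n - 1) * k := by rw [Finset.card_erase_of_mem (Finset.mem_univ b), Finset.card_univ,
            Fintype.card_fin]
    · rintro ⟨a, u, v⟩ ht
      rw [Finset.mem_filter, Tas, Finset.mem_filter] at ht
      obtain ⟨⟨-, h1, h2, h3, h4⟩, rfl⟩ := ht
      exact Finset.mem_erase.2 ⟨fun hh => h1 hh, Finset.mem_univ _⟩
    · intro a₀
      refine le_trans (Finset.card_le_card_of_injOn (fun t => t.2.2) ?_ ?_)
        (class_card χ k hχ a₀ b)
      · rintro ⟨a, u, v⟩ ht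
        simp only [Finset.mem_coe, Finset.mem_filter, Tas] at ht
        obtain ⟨⟨⟨-, h1, h2, h3, h4⟩, rfl⟩, rfl⟩ := ht
        exact Finset.mem_filter.2 ⟨Finset.mem_univ _, fun hh => h2 hh.symm, h4.symm⟩
      · rintro ⟨a, u, v⟩ ht ⟨a', u', v'⟩ ht' hvv
        simp only [Finset.coe_filter, Set.mem_setOf_eq, Finset.mem_filter] at ht ht'
        simp only at hvv
        simp [Prod.ext_iff, ht.1.2.symm, ht'.1.2.symm, ht.2, ht'.2, hvv]
  have hcC : ((Tas χ).filter fun t => b = t.2.2).card ≤ (n - 1) * k := by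
    have := proj_bound ((Tas χ).filter fun t => b = t.2.2) (fun t => t.1) (univ.erase b) k ?_ ?_
    · calc _ ≤ (univ.erase b).card * k := this
        _ = (n - 1) * k := by rw [Finset.card_erase_of_mem (Finset.mem_univ b), Finset.card_univ,
            Fintype.card_fin]
    · rintro ⟨a, u, v⟩ ht
      rw [Finset.mem_filter, Tas, Finset.mem_filter] at ht
      obtain ⟨⟨-, h1, h2, h3, h4⟩, rfl⟩ := ht
      exact Finset.mem_erase.2 ⟨fun hh => h2 hh, Finset.mem_univ _⟩
    · intro a₀
      refine le_trans (Finset.card_le_card_of_injOn (fun t => t.2.1) ?_ ?_)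
        (class_card χ k hχ a₀ b)
      · rintro ⟨a, u, v⟩ ht
        simp only [Finset.mem_coe, Finset.mem_filter, Tas] at ht
        obtain ⟨⟨⟨-, h1, h2, h3, h4⟩, rfl⟩, rfl⟩ := ht
        exact Finset.mem_filter.2 ⟨Finset.mem_univ _, fun hh => h1 hh.symm, h4⟩
      · rintro ⟨a, u, v⟩ ht ⟨a', u', v'⟩ ht' hvv
        simp only [Finset.coe_filter, Set.mem_setOf_eq, Finset.mem_filter] at ht ht'
        simp only at hvv
        simp [Prod.ext_iff, ht.1.2.symm, ht'.1.2.symm, ht.2, ht'.2, hvv]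
  calc ((Tas χ).filter fun t => b = t.1 ∨ b = t.2.1 ∨ b = t.2.2).card
      ≤ (((Tas χ).filter fun t => b = t.1) ∪ (((Tas χ).filter fun t => b = t.2.1)
        ∪ ((Tas χ).filter fun t => b = t.2.2))).card := Finset.card_le_card hsub
    _ ≤ ((Tas χ).filter fun t => b = t.1).card + (((Tas χ).filter fun t => b = t.2.1)
        ∪ ((Tas χ).filter fun t => b = t.2.2)).card := Finset.card_union_le _ _
    _ ≤ ((Tas χ).filter fun t => b = t.1).card + (((Tas χ).filter fun t => b = t.2.1).card
        + ((Tas χ).filter fun t => b = t.2.2).card) := by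
          have := Finset.card_union_le ((Tas χ).filter fun t => b = t.2.1)
            ((Tas χ).filter fun t => b = t.2.2)
          omega
    _ ≤ 3 * ((n - 1) * k) := by omega


lemma Tch_card (G : SimpleGraph (Fin n)) (p : ℝ)
    (hcherries :
      ({c : Fin n × Sym2 (Fin n) | ¬ c.2.IsDiag ∧ ∀ x ∈ c.2, G.Adj c.1 x}.ncard : ℝ) ≤ p * n) :
    ((Tch G).card : ℝ) ≤ p * n := by
  have hinj : (Tch G).card
      ≤ {c : Fin n × Sym2 (Fin n) | ¬ c.2.IsDiag ∧ ∀ x ∈ c.2, G.Adj c.1 x}.toFinset.card := by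
    apply Finset.card_le_card_of_injOn (fun t => (t.1, s(t.2.1, t.2.2)))
    · rintro ⟨x, y, z⟩ ht
      rw [Finset.mem_coe, Tch, Finset.mem_filter] at ht
      obtain ⟨-, h1, h2, h3⟩ := ht
      rw [Finset.mem_coe, Set.mem_toFinset]
      refine ⟨?_, ?_⟩
      · rw [Sym2.mk_isDiag_iff]
        exact ne_of_lt h3
      · intro w hw
        rcases Sym2.mem_iff.1 hw with rfl | rfl
        exacts [h1, h2]
    · rintro ⟨x, y, z⟩ ht ⟨x', y', z'⟩ ht' heq
      simp only [Finset.coe_filter, Set.mem_setOf_eq, Tch, Finset.mem_filter] at ht ht'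
      obtain ⟨e1, e2⟩ := Prod.ext_iff.1 heq
      simp only at e1 e2
      rcases Sym2.eq_iff.1 e2 with ⟨rfl, rfl⟩ | ⟨rfl, rfl⟩
      · simp [Prod.ext_iff, e1]
      · exact absurd ht'.2.2.2 (asymm ht.2.2.2)
  calc ((Tch G).card : ℝ)
      ≤ ({c : Fin n × Sym2 (Fin n) | ¬ c.2.IsDiag ∧ ∀ x ∈ c.2, G.Adj c.1 x}.toFinset.card : ℝ) := by
        exact_mod_cast hinj
    _ = ({c : Fin n × Sym2 (Fin n) | ¬ c.2.IsDiag ∧ ∀ x ∈ c.2, G.Adj c.1 x}.ncard : ℝ) := by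
        rw [Set.ncard_eq_toFinset_card']
    _ ≤ p * n := hcherries

lemma Tch_vertex_card (G : SimpleGraph (Fin n)) (q : ℝ)
    (hvertex : ∀ v : Fin n,
      ({c : Fin n × Sym2 (Fin n) |
          (¬ c.2.IsDiag ∧ ∀ x ∈ c.2, G.Adj c.1 x) ∧ (v = c.1 ∨ v ∈ c.2)}.ncard : ℝ) ≤ q)
    (w : Fin n) :
    (((Tch G).filter fun c => w = c.1 ∨ w = c.2.1 ∨ w = c.2.2).card : ℝ) ≤ q := by
  have hinj : ((Tch G).filter fun c => w = c.1 ∨ w = c.2.1 ∨ w = c.2.2).card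
      ≤ {c : Fin n × Sym2 (Fin n) |
          (¬ c.2.IsDiag ∧ ∀ x ∈ c.2, G.Adj c.1 x) ∧ (w = c.1 ∨ w ∈ c.2)}.toFinset.card := by
    apply Finset.card_le_card_of_injOn (fun t => (t.1, s(t.2.1, t.2.2)))
    · rintro ⟨x, y, z⟩ ht
      rw [Finset.mem_coe, Finset.mem_filter, Tch, Finset.mem_filter] at ht
      obtain ⟨⟨-, h1, h2, h3⟩, hor⟩ := ht
      rw [Finset.mem_coe, Set.mem_toFinset]
      refine ⟨⟨?_, ?_⟩, ?_⟩
      · rw [Sym2.mk_isDiag_iff]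
        exact ne_of_lt h3
      · intro w' hw'
        rcases Sym2.mem_iff.1 hw' with rfl | rfl
        exacts [h1, h2]
      · rcases hor with h | h | h
        · exact Or.inl h
        · exact Or.inr (Sym2.mem_iff.2 (Or.inl h))
        · exact Or.inr (Sym2.mem_iff.2 (Or.inr h))
    · rintro ⟨x, y, z⟩ ht ⟨x', y', z'⟩ ht' heq
      simp only [Finset.coe_filter, Set.mem_setOf_eq, Tch, Finset.mem_filter] at ht ht'
      obtain ⟨e1, e2⟩ := Prod.ext_iff.1 heq
      simp only at e1 e2
      rcases Sym2.eq_iff.1 e2 with ⟨rfl, rfl⟩ | ⟨rfl, rfl⟩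
      · simp [Prod.ext_iff, e1]
      · exact absurd ht'.1.2.2.2 (asymm ht.1.2.2.2)
  calc (((Tch G).filter fun c => w = c.1 ∨ w = c.2.1 ∨ w = c.2.2).card : ℝ)
      ≤ ({c : Fin n × Sym2 (Fin n) |
          (¬ c.2.IsDiag ∧ ∀ x ∈ c.2, G.Adj c.1 x) ∧ (w = c.1 ∨ w ∈ c.2)}.toFinset.card : ℝ) := by
        exact_mod_cast hinj
    _ = ({c : Fin n × Sym2 (Fin n) |
          (¬ c.2.IsDiag ∧ ∀ x ∈ c.2, G.Adj c.1 x) ∧ (w = c.1 ∨ w ∈ c.2)}.ncard : ℝ) := by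
        rw [Set.ncard_eq_toFinset_card']
    _ ≤ q := hvertex w

lemma K_inl (G : SimpleGraph (Fin n)) (χ : Sym2 (Fin n) → C) (w : Fin n) :
    (TA G χ).filter (fun j => (Sum.inl w : Fin n ⊕ Fin n) ∈ slotsA j)
      = ((Tch G).filter fun c => w = c.1 ∨ w = c.2.1 ∨ w = c.2.2) ×ˢ Tas χ := by
  ext ⟨⟨x, y, z⟩, a, u, v⟩
  simp only [TA, Finset.mem_filter, Finset.mem_product, slotsA, Finset.mem_insert,
    Finset.mem_singleton, Sum.inl.injEq, reduceCtorEq, or_false]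
  tauto

lemma K_inr (G : SimpleGraph (Fin n)) (χ : Sym2 (Fin n) → C) (b : Fin n) :
    (TA G χ).filter (fun j => (Sum.inr b : Fin n ⊕ Fin n) ∈ slotsA j)
      = Tch G ×ˢ ((Tas χ).filter fun t => b = t.1 ∨ b = t.2.1 ∨ b = t.2.2) := by
  ext ⟨⟨x, y, z⟩, a, u, v⟩
  simp only [TA, Finset.mem_filter, Finset.mem_product, slotsA, Finset.mem_insert,
    Finset.mem_singleton, Sum.inr.injEq, reduceCtorEq, false_or]
  tauto

lemma slotsA_nonempty (i : Idx n) : (slotsA i).Nonempty :=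
  ⟨Sum.inl i.1.1, by rw [slotsA]; simp⟩

lemma final_conv (G : SimpleGraph (Fin n)) (χ : Sym2 (Fin n) → C) (σ : Equiv.Perm (Fin n))
    (hσ : ∀ i ∈ TA G χ, σ ∉ EA i) :
    ∀ x y z : Fin n, G.Adj x y → G.Adj x z → y ≠ z → χ s(σ x, σ y) ≠ χ s(σ x, σ z) := by
  intro x y z hxy hxz hyz hcon
  rcases hyz.lt_or_gt with h | h
  · have hi : (((x, y, z), (σ x, σ y, σ z)) : Idx n) ∈ TA G χ := by
      rw [TA, Finset.mem_product]
      constructor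
      · rw [Tch, Finset.mem_filter]
        exact ⟨Finset.mem_univ _, hxy, hxz, h⟩
      · rw [Tas, Finset.mem_filter]
        exact ⟨Finset.mem_univ _, σ.injective.ne hxy.ne, σ.injective.ne hxz.ne,
          σ.injective.ne hyz, hcon⟩
    exact hσ _ hi (by rw [EA, Finset.mem_filter]; exact ⟨Finset.mem_univ _, rfl, rfl, rfl⟩)
  · have hi : (((x, z, y), (σ x, σ z, σ y)) : Idx n) ∈ TA G χ := by
      rw [TA, Finset.mem_product]
      constructor
      · rw [Tch, Finset.mem_filter]
        exact ⟨Finset.mem_univ _, hxz, hxy, h⟩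
      · rw [Tas, Finset.mem_filter]
        exact ⟨Finset.mem_univ _, σ.injective.ne hxz.ne, σ.injective.ne hxy.ne,
          σ.injective.ne hyz.symm, hcon.symm⟩
    exact hσ _ hi (by rw [EA, Finset.mem_filter]; exact ⟨Finset.mem_univ _, rfl, rfl, rfl⟩)

end App


end BKP


set_option maxHeartbeats 2000000 in
/-- **Theorem 3** (Böttcher–Kohayakawa–Procacci).
Let `G` be a graph on `n` vertices containing at most `p·n` cherries (a cherry is a pair of
distinct edges sharing a vertex, encoded here as a pair `(y, s(x,z))` of a middle vertex
together with the unordered pair of the two distinct outer vertices), such that each vertex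
of `G` is contained in at most `q` cherries.  If `k` is a positive integer with
`k ≤ (1/3)·(5/6)^5·(n−2)/(q+3p)`, then every locally `k`-bounded edge colouring `χ` of the
complete graph `K_n` contains a properly coloured copy of `G`. -/
theorem properly_coloured_copy_of_graph_with_few_cherries
    {n : ℕ} {C : Type*} (G : SimpleGraph (Fin n)) (p q : ℝ) (hp : 0 < p) (hq : 0 < q)
    (hcherries :
      ({c : Fin n × Sym2 (Fin n) | ¬ c.2.IsDiag ∧ ∀ x ∈ c.2, G.Adj c.1 x}.ncard : ℝ) ≤ p * n)
    (hvertex : ∀ v : Fin n,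
      ({c : Fin n × Sym2 (Fin n) |
          (¬ c.2.IsDiag ∧ ∀ x ∈ c.2, G.Adj c.1 x) ∧ (v = c.1 ∨ v ∈ c.2)}.ncard : ℝ) ≤ q)
    (k : ℕ) (hk : 0 < k)
    (hkle : (k : ℝ) ≤ (1/3) * (5/6)^5 * ((n : ℝ) - 2) / (q + 3 * p))
    (χ : Sym2 (Fin n) → C)
    (hχ : ∀ (v : Fin n) (c : C), {u : Fin n | u ≠ v ∧ χ s(v, u) = c}.ncard ≤ k) :
    ∃ σ : Fin n ↪ Fin n, ∀ x y z : Fin n, G.Adj x y → G.Adj x z → y ≠ z →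
      χ s(σ x, σ y) ≠ χ s(σ x, σ z) := by
  classical
  have hex : ∃ σ : Equiv.Perm (Fin n), ∀ i ∈ BKP.TA G χ, σ ∉ BKP.EA i := by
    rcases (BKP.TA G χ).eq_empty_or_nonempty with hT | ⟨i₀, hi₀⟩
    · exact ⟨1, fun i hi => absurd (hT ▸ hi) (Finset.notMem_empty i)⟩
    · have hqp : (0:ℝ) < q + 3 * p := by linarith
      have hk1 : (1:ℝ) ≤ (k:ℝ) := by exact_mod_cast hk
      have hkle' : (k:ℝ) * (q + 3*p) ≤ (1/3) * (5/6)^5 * ((n:ℝ) - 2) := by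
        have := (le_div_iff₀ hqp).1 hkle
        linarith
      have hn2 : (0:ℝ) < (n:ℝ) - 2 := by nlinarith [hkle']
      have hn3 : 3 ≤ n := by
        have h2n : (2:ℝ) < (n:ℝ) := by linarith
        exact_mod_cast Nat.succ_le_of_lt (by exact_mod_cast h2n)
      -- q is at least 1 since there is a cherry
      have hq1 : (1:ℝ) ≤ q := by
        obtain ⟨⟨x, y, z⟩, a, u, v⟩ := i₀
        rw [BKP.TA, Finset.mem_product] at hi₀
        obtain ⟨hch, -⟩ := hi₀
        rw [BKP.Tch, Finset.mem_filter] at hch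
        obtain ⟨-, h1, h2, h3⟩ := hch
        have hmem : ((x, s(y,z)) : Fin n × Sym2 (Fin n)) ∈
            {c : Fin n × Sym2 (Fin n) |
              (¬ c.2.IsDiag ∧ ∀ w ∈ c.2, G.Adj c.1 w) ∧ (x = c.1 ∨ x ∈ c.2)} := by
          refine ⟨⟨?_, ?_⟩, Or.inl rfl⟩
          · rw [Sym2.mk_isDiag_iff]
            exact ne_of_lt h3
          · intro w hw
            rcases Sym2.mem_iff.1 hw with rfl | rfl
            exacts [h1, h2]
        have hfin : ({c : Fin n × Sym2 (Fin n) |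
              (¬ c.2.IsDiag ∧ ∀ w ∈ c.2, G.Adj c.1 w) ∧ (x = c.1 ∨ x ∈ c.2)}).Finite :=
          Set.toFinite _
        have hpos : 0 < ({c : Fin n × Sym2 (Fin n) |
              (¬ c.2.IsDiag ∧ ∀ w ∈ c.2, G.Adj c.1 w) ∧ (x = c.1 ∨ x ∈ c.2)}).ncard :=
          (Set.ncard_pos hfin).2 ⟨_, hmem⟩
        have h1R : (1:ℝ) ≤ (({c : Fin n × Sym2 (Fin n) |
              (¬ c.2.IsDiag ∧ ∀ w ∈ c.2, G.Adj c.1 w) ∧ (x = c.1 ∨ x ∈ c.2)}).ncard : ℝ) := by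
          exact_mod_cast hpos
        exact le_trans h1R (hvertex x)
      set Nc : ℕ := n * (n - 1) * (n - 2) with hNc
      set N2 : ℕ := (n * n - n) * k with hN2
      set P : ℝ := ((Nc : ℕ) : ℝ)⁻¹ with hP'
      set m : ℝ := (2/5) / ((N2 : ℝ) * (q + 3 * p)) with hm'
      have hc1 : ((n - 1 : ℕ) : ℝ) = (n:ℝ) - 1 := by
        rw [Nat.cast_sub (by omega)]
        norm_num
      have hc2 : ((n - 2 : ℕ) : ℝ) = (n:ℝ) - 2 := by
        rw [Nat.cast_sub (by omega)]
        norm_num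
      have hcnn : ((n*n - n : ℕ) : ℝ) = (n:ℝ)*(n:ℝ) - (n:ℝ) := by
        rw [Nat.cast_sub (Nat.le_mul_of_pos_left n (by omega))]
        push_cast
        ring
      have hNcR : ((Nc : ℕ) : ℝ) = (n:ℝ) * ((n:ℝ)-1) * ((n:ℝ)-2) := by
        rw [hNc]
        push_cast [hc1, hc2]
        ring
      have hN2R : ((N2:ℕ):ℝ) = ((n:ℝ)*(n:ℝ) - (n:ℝ)) * (k:ℝ) := by
        rw [hN2]
        push_cast [hcnn]
        ring
      have hnR : (3:ℝ) ≤ (n:ℝ) := by exact_mod_cast hn3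
      have hNcpos : (0:ℝ) < ((Nc:ℕ):ℝ) := by rw [hNcR]; nlinarith
      have hN2pos : (0:ℝ) < ((N2:ℕ):ℝ) := by rw [hN2R]; nlinarith
      have hPpos : (0:ℝ) < P := by rw [hP']; exact inv_pos.2 hNcpos
      have hmpos : (0:ℝ) < m := by
        rw [hm']
        exact div_pos (by norm_num) (mul_pos hN2pos hqp)
      have hm1 : m < 1 := by
        rw [hm', div_lt_one (mul_pos hN2pos hqp)]
        have h6 : (6:ℝ) ≤ (N2:ℝ) := by rw [hN2R]; nlinarith
        nlinarith [hq1, hp.le]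
      have hTasR : ((BKP.Tas χ).card : ℝ) ≤ (N2:ℝ) := by
        have h := BKP.Tas_card χ k hχ
        rw [hN2]
        exact_mod_cast h
      have hTasnn : (0:ℝ) ≤ ((BKP.Tas χ).card : ℝ) := Nat.cast_nonneg _
      have hApos : ∀ w : Fin n,
          m * (((BKP.TA G χ).filter fun j => (Sum.inl w : Fin n ⊕ Fin n) ∈ BKP.slotsA j).card : ℝ)
          ≤ (2/5) * q / (q + 3*p) := by
        intro w
        rw [BKP.K_inl, Finset.card_product]
        have h1 := BKP.Tch_vertex_card G q hvertex w
        have hb : ((((BKP.Tch G).filter fun c => w = c.1 ∨ w = c.2.1 ∨ w = c.2.2).card *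
            (BKP.Tas χ).card : ℕ) : ℝ) ≤ q * (N2:ℝ) := by
          push_cast
          exact mul_le_mul h1 hTasR hTasnn (le_trans (Nat.cast_nonneg _) h1)
        calc m * ((((BKP.Tch G).filter fun c => w = c.1 ∨ w = c.2.1 ∨ w = c.2.2).card *
              (BKP.Tas χ).card : ℕ) : ℝ)
            ≤ m * (q * (N2:ℝ)) := mul_le_mul_of_nonneg_left hb hmpos.le
          _ = (2/5) * q / (q + 3*p) := by
              rw [hm']
              field_simp
      have hAval : ∀ b : Fin n,
          m * (((BKP.TA G χ).filter fun j => (Sum.inr b : Fin n ⊕ Fin n) ∈ BKP.slotsA j).card : ℝ)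
          ≤ (2/5) * (3*p) / (q + 3*p) := by
        intro b
        rw [BKP.K_inr, Finset.card_product]
        have h1 := BKP.Tch_card G p hcherries
        have h2 : (((BKP.Tas χ).filter fun t => b = t.1 ∨ b = t.2.1 ∨ b = t.2.2).card : ℝ)
            ≤ 3 * (((n:ℝ)-1) * (k:ℝ)) := by
          have h := BKP.Tas_val_card χ k hχ b
          calc (((BKP.Tas χ).filter fun t => b = t.1 ∨ b = t.2.1 ∨ b = t.2.2).card : ℝ)
              ≤ ((3 * ((n-1) * k) : ℕ) : ℝ) := by exact_mod_cast h
            _ = 3 * (((n:ℝ)-1) * (k:ℝ)) := by push_cast [hc1]; ring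
        have hb : (((BKP.Tch G).card *
            ((BKP.Tas χ).filter fun t => b = t.1 ∨ b = t.2.1 ∨ b = t.2.2).card : ℕ) : ℝ)
            ≤ (p * n) * (3 * (((n:ℝ)-1) * (k:ℝ))) := by
          push_cast
          exact mul_le_mul h1 h2 (Nat.cast_nonneg _) (by positivity)
        calc m * (((BKP.Tch G).card *
              ((BKP.Tas χ).filter fun t => b = t.1 ∨ b = t.2.1 ∨ b = t.2.2).card : ℕ) : ℝ)
            ≤ m * ((p * n) * (3 * (((n:ℝ)-1) * (k:ℝ)))) := mul_le_mul_of_nonneg_left hb hmpos.le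
          _ = (2/5) * (3*p) * ((n:ℝ) * ((n:ℝ)-1) * (k:ℝ)) / (((n:ℝ)*(n:ℝ) - (n:ℝ)) * (k:ℝ) * (q + 3*p)) := by
              rw [hm', hN2R]
              field_simp
          _ = (2/5) * (3*p) / (q + 3*p) := by
              have hk0 : (k:ℝ) ≠ 0 := by positivity
              have hnn0 : (n:ℝ)*(n:ℝ) - (n:ℝ) ≠ 0 := by nlinarith
              rw [div_eq_div_iff (mul_ne_zero (mul_ne_zero hnn0 hk0) hqp.ne') hqp.ne']
              ring
      have hcrit : ∀ i ∈ BKP.TA G χ,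
          P * ∏ s ∈ BKP.slotsA i,
            (1 + m * (((BKP.TA G χ).filter fun j => s ∈ BKP.slotsA j).card : ℝ)) ≤ m := by
        intro i hi
        obtain ⟨⟨x, y, z⟩, a, u, v⟩ := i
        rw [BKP.TA, Finset.mem_product] at hi
        obtain ⟨hch, has⟩ := hi
        rw [BKP.Tch, Finset.mem_filter] at hch
        rw [BKP.Tas, Finset.mem_filter] at has
        obtain ⟨-, hA1, hA2, hyz'⟩ := hch
        obtain ⟨-, hau, hav, huv, -⟩ := has
        have hxy : x ≠ y := hA1.ne
        have hxz : x ≠ z := hA2.ne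
        have hyz : y ≠ z := ne_of_lt hyz'
        set SP : Finset (Fin n ⊕ Fin n) := {Sum.inl x, Sum.inl y, Sum.inl z} with hSP
        set SV : Finset (Fin n ⊕ Fin n) := {Sum.inr a, Sum.inr u, Sum.inr v} with hSV
        set f : (Fin n ⊕ Fin n) → ℝ :=
          fun s => 1 + m * (((BKP.TA G χ).filter fun j => s ∈ BKP.slotsA j).card : ℝ) with hf
        have hunion : BKP.slotsA (((x,y,z),(a,u,v)) : BKP.Idx n) = SP ∪ SV := by
          rw [BKP.slotsA, hSP, hSV]
          ext s
          simp only [Finset.mem_union, Finset.mem_insert, Finset.mem_singleton]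
          tauto
        have hdisj : Disjoint SP SV := by
          rw [hSP, hSV, Finset.disjoint_left]
          intro s hs hs'
          simp only [Finset.mem_insert, Finset.mem_singleton] at hs hs'
          rcases hs with rfl | rfl | rfl <;> simp_all
        have hfnn : ∀ s, 0 ≤ f s := by
          intro s
          rw [hf]
          positivity
        set Apos : ℝ := (2/5) * q / (q + 3*p) with hApos'
        set Aval : ℝ := (2/5) * (3*p) / (q + 3*p) with hAval'
        have hposnn : 0 ≤ Apos := by
          rw [hApos']
          exact div_nonneg (by nlinarith [hq.le]) hqp.le
        have hvalnn : 0 ≤ Aval := by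
          rw [hAval']
          exact div_nonneg (by nlinarith [hp.le]) hqp.le
        have hSPle : ∀ s ∈ SP, f s ≤ 1 + Apos := by
          intro s hs
          rw [hSP] at hs
          simp only [Finset.mem_insert, Finset.mem_singleton] at hs
          have hx' := hApos x
          have hy' := hApos y
          have hz' := hApos z
          rcases hs with rfl | rfl | rfl
          · simp only [hf]; linarith
          · simp only [hf]; linarith
          · simp only [hf]; linarith
        have hSVle : ∀ s ∈ SV, f s ≤ 1 + Aval := by
          intro s hs
          rw [hSV] at hs
          simp only [Finset.mem_insert, Finset.mem_singleton] at hs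
          have ha' := hAval a
          have hu' := hAval u
          have hv' := hAval v
          rcases hs with rfl | rfl | rfl
          · simp only [hf]; linarith
          · simp only [hf]; linarith
          · simp only [hf]; linarith
        have hSPcard : SP.card = 3 := by
          rw [hSP]
          rw [Finset.card_insert_of_notMem (by simp [hxy, hxz]),
            Finset.card_insert_of_notMem (by simp [hyz]), Finset.card_singleton]
        have hSVcard : SV.card = 3 := by
          rw [hSV]
          rw [Finset.card_insert_of_notMem (by simp [hau, hav]),
            Finset.card_insert_of_notMem (by simp [huv]), Finset.card_singleton]
        have hprodSP : ∏ s ∈ SP, f s ≤ (1 + Apos)^3 := by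
          calc ∏ s ∈ SP, f s ≤ ∏ _s ∈ SP, (1 + Apos) :=
                Finset.prod_le_prod (fun s _ => hfnn s) hSPle
            _ = (1+Apos)^3 := by rw [Finset.prod_const, hSPcard]
        have hprodSV : ∏ s ∈ SV, f s ≤ (1 + Aval)^3 := by
          calc ∏ s ∈ SV, f s ≤ ∏ _s ∈ SV, (1 + Aval) :=
                Finset.prod_le_prod (fun s _ => hfnn s) hSVle
            _ = (1+Aval)^3 := by rw [Finset.prod_const, hSVcard]
        have hAM : (1+Apos)*(1+Aval) ≤ ((6:ℝ)/5)^2 := by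
          have hsum : Apos + Aval = 2/5 := by
            rw [hApos', hAval']
            field_simp
          nlinarith [sq_nonneg (Apos - Aval), hposnn, hvalnn]
        have hprod : ∏ s ∈ SP ∪ SV, f s ≤ ((6:ℝ)/5)^6 := by
          rw [Finset.prod_union hdisj]
          calc (∏ s ∈ SP, f s) * (∏ s ∈ SV, f s)
              ≤ (1+Apos)^3 * (1+Aval)^3 := by
                apply mul_le_mul hprodSP hprodSV
                  (Finset.prod_nonneg (fun s _ => hfnn s)) (by positivity)
            _ = ((1+Apos)*(1+Aval))^3 := (mul_pow _ _ 3).symm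
            _ ≤ (((6:ℝ)/5)^2)^3 := by
                apply pow_le_pow_left₀ (by positivity) hAM
            _ = ((6:ℝ)/5)^6 := by rw [← pow_mul]
        rw [hunion]
        have h1 : P * ∏ s ∈ SP ∪ SV, f s ≤ P * ((6:ℝ)/5)^6 :=
          mul_le_mul_of_nonneg_left hprod hPpos.le
        refine le_trans h1 ?_
        have e2 : ((6:ℝ)/5)^6 = 46656/15625 := by norm_num
        have e1 : ((5:ℝ)/6)^5 = 3125/7776 := by norm_num
        rw [e1] at hkle'
        have key : (46656/15625 : ℝ) * ((k:ℝ)*(q+3*p)) ≤ (2/5) * ((n:ℝ)-2) := by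
          linarith
        rw [hP', hm', e2, inv_mul_eq_div, div_le_div_iff₀ hNcpos (mul_pos hN2pos hqp)]
        rw [hN2R, hNcR]
        have hnn : (0:ℝ) ≤ (n:ℝ)*(n:ℝ) - (n:ℝ) := by nlinarith
        nlinarith [mul_le_mul_of_nonneg_right key hnn]
      have hlop : ∀ i ∈ BKP.TA G χ, ∀ Y ⊆ BKP.TA G χ,
          (∀ j ∈ Y, Disjoint (BKP.slotsA i) (BKP.slotsA j)) →
          ((BKP.EA i ∩ BKP.Av BKP.EA Y).card : ℝ) ≤ P * BKP.Wf BKP.EA Y := by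
        intro i hi Y _ hfar
        have hnat := BKP.lopA_nat G χ i hi Y hfar
        have hcastnat : ((BKP.EA i ∩ BKP.Av BKP.EA Y).card : ℝ) * ((Nc:ℕ):ℝ)
            ≤ ((BKP.Av (BKP.EA (n := n)) Y).card : ℝ) := by
          rw [hNc]
          exact_mod_cast hnat
        rw [BKP.Wf, hP', inv_mul_eq_div, le_div_iff₀ hNcpos]
        exact hcastnat
      exact BKP.core BKP.EA BKP.slotsA (BKP.TA G χ) P m hPpos.le hmpos hm1
        (fun i _ => BKP.slotsA_nonempty i) hcrit hlop
  obtain ⟨σ, hσ⟩ := hex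
  refine ⟨σ.toEmbedding, ?_⟩
  intro x y z hxy hxz hyz
  have h := BKP.final_conv G χ σ hσ x y z hxy hxz hyz
  simpa using h
end

section
/- For every positive integer k there exist a constant c > 0 and an integer n₀ such that for all n ≥ n₀ the following holds: for every graph G on n vertices with maximum degree at most c·√n, every locally k-bounded edge colouring of the complete graph K_n contains a copy of G that is properly coloured, i.e., there is an injection σ: V(G) → V(K_n) such that any two edges of G sharing a vertex are mapped by σ to edges of K_n receiving different colours. -/
/-!
We prove the theorem via a lopsided Lovász Local Lemma for random permutations
(à la Lu–Székely), fully combinatorially: a swap-injection argument gives the key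
correlation inequality, an induction on finite constraint sets gives the local lemma,
and explicit double counting bounds the number of conflicting "bad" constraints.
-/

open Finset

namespace PCC

variable {V : Type} [Fintype V] [DecidableEq V]

/-- A constraint: a triple of (position, value) pairs. -/
def occ (f : Fin 3 → V × V) (π : Equiv.Perm V) : Prop := ∀ i, π (f i).1 = (f i).2

instance (f : Fin 3 → V × V) (π : Equiv.Perm V) : Decidable (occ f π) :=
  inferInstanceAs (Decidable (∀ i : Fin 3, π (f i).1 = (f i).2))

/-- Permutations avoiding all constraints in `𝒞`. -/
def Av (𝒞 : Finset (Fin 3 → V × V)) : Finset (Equiv.Perm V) :=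
  univ.filter fun π => ∀ f ∈ 𝒞, ¬ occ f π

lemma mem_Av {𝒞 : Finset (Fin 3 → V × V)} {π : Equiv.Perm V} :
    π ∈ Av 𝒞 ↔ ∀ f ∈ 𝒞, ¬ occ f π := by simp [Av]

lemma Av_anti {𝒞 𝒟 : Finset (Fin 3 → V × V)} (h : 𝒞 ⊆ 𝒟) : Av 𝒟 ⊆ Av 𝒞 := by
  intro π hπ
  rw [mem_Av] at *
  exact fun f hf => hπ f (h hf)

lemma swap_step (𝒞 : Finset (Fin 3 → V × V)) (φ : Fin 3 → V × V)
    (hfar : ∀ f ∈ 𝒞, ∀ i j : Fin 3, (f i).1 ≠ (φ j).1 ∧ (f i).2 ≠ (φ j).2)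
    (hdd : ∀ i j : Fin 3, i ≠ j → (φ i).1 ≠ (φ j).1)
    (hdr : ∀ i j : Fin 3, i ≠ j → (φ i).2 ≠ (φ j).2)
    (T : Finset (Fin 3)) (t : Fin 3) (ht : t ∉ T) :
    ((Av 𝒞).filter fun π => ∀ i ∈ insert t T, π (φ i).1 = (φ i).2).card
        * (Fintype.card V - T.card)
      ≤ ((Av 𝒞).filter fun π => ∀ i ∈ T, π (φ i).1 = (φ i).2).card := by
  classical
  set x := (φ t).1 with hx
  set a := (φ t).2 with ha
  set badb : Finset V := T.image fun i => (φ i).2 with hbadb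
  have hbadbcard : badb.card = T.card := by
    apply Finset.card_image_of_injOn
    intro i hi j hj hij
    by_contra hne
    exact hdr i j hne hij
  set S := ((Av 𝒞).filter fun π => ∀ i ∈ insert t T, π (φ i).1 = (φ i).2) with hS
  have hcards : (S ×ˢ (univ \ badb)).card = S.card * (Fintype.card V - T.card) := by
    rw [Finset.card_product, Finset.card_sdiff_of_subset (Finset.subset_univ _), Finset.card_univ,
      hbadbcard]
  rw [← hcards]
  apply Finset.card_le_card_of_injOn (fun p => p.1 * Equiv.swap x (p.1⁻¹ p.2))
  · rintro ⟨π, b⟩ hp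
    rw [Finset.mem_coe, Finset.mem_product] at hp
    obtain ⟨hπ, hb⟩ := hp
    rw [hS, Finset.mem_filter] at hπ
    obtain ⟨hπAv, hπfix⟩ := hπ
    have hπx : π x = a := hπfix t (Finset.mem_insert_self _ _)
    have hbnot : b ∉ badb := (Finset.mem_sdiff.mp hb).2
    set q := π⁻¹ b with hq
    have hπq : π q = b := Equiv.Perm.eq_inv_iff_eq.mp rfl
    have hval : ∀ u, u ≠ x → u ≠ q → (π * Equiv.swap x q) u = π u := by
      intro u h1 h2
      rw [Equiv.Perm.mul_apply, Equiv.swap_apply_of_ne_of_ne h1 h2]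
    have hvq : (π * Equiv.swap x q) q = a := by
      rw [Equiv.Perm.mul_apply, Equiv.swap_apply_right, hπx]
    rw [Finset.mem_coe, Finset.mem_filter]
    constructor
    · rw [mem_Av]
      intro f hf hocc
      have hoccπ : occ f π := by
        intro i
        have h1 : (f i).1 ≠ x := (hfar f hf i t).1
        by_cases h2 : (f i).1 = q
        · exfalso
          have hoi := hocc i
          rw [h2, hvq] at hoi
          exact (hfar f hf i t).2 hoi.symm
        · have hoi := hocc i
          rwa [hval _ h1 h2] at hoi
      exact (mem_Av.mp hπAv) f hf hoccπ
    · intro i hi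
      have hit : i ≠ t := by rintro rfl; exact ht hi
      have h1 : (φ i).1 ≠ x := hdd i t hit
      have h2 : (φ i).1 ≠ q := by
        intro hqe
        apply hbnot
        rw [Finset.mem_image]
        refine ⟨i, hi, ?_⟩
        rw [← hπfix i (Finset.mem_insert_of_mem hi), hqe, hπq]
      rw [hval _ h1 h2]
      exact hπfix i (Finset.mem_insert_of_mem hi)
  · rintro ⟨π₁, b₁⟩ hp₁ ⟨π₂, b₂⟩ hp₂ heq
    simp only [Finset.coe_product, Set.mem_prod, Finset.mem_coe] at hp₁ hp₂
    have hfacts : ∀ (π : Equiv.Perm V) (b : V), π ∈ S →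
        (π * Equiv.swap x (π⁻¹ b)) x = b ∧ (π * Equiv.swap x (π⁻¹ b)) (π⁻¹ b) = a ∧
          (π * Equiv.swap x (π⁻¹ b)) * Equiv.swap x (π⁻¹ b) = π := by
      intro π b hπ
      rw [hS, Finset.mem_filter] at hπ
      have hπx : π x = a := hπ.2 t (Finset.mem_insert_self _ _)
      refine ⟨?_, ?_, ?_⟩
      · rw [Equiv.Perm.mul_apply, Equiv.swap_apply_left, Equiv.Perm.eq_inv_iff_eq.mp (rfl : π⁻¹ b = π⁻¹ b)]
      · rw [Equiv.Perm.mul_apply, Equiv.swap_apply_right, hπx]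
      · rw [mul_assoc, Equiv.swap_mul_self, mul_one]
    obtain ⟨hA1, hA2, hA3⟩ := hfacts π₁ b₁ hp₁.1
    obtain ⟨hB1, hB2, hB3⟩ := hfacts π₂ b₂ hp₂.1
    dsimp only at heq
    have hb : b₁ = b₂ := by rw [← hA1, ← hB1, heq]
    have hqeq : π₁⁻¹ b₁ = π₂⁻¹ b₂ := by
      have e1 : (π₁ * Equiv.swap x (π₁⁻¹ b₁))⁻¹ a = π₁⁻¹ b₁ := by
        rw [← hA2, Equiv.Perm.inv_eq_iff_eq]
      have e2 : (π₂ * Equiv.swap x (π₂⁻¹ b₂))⁻¹ a = π₂⁻¹ b₂ := by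
        rw [← hB2, Equiv.Perm.inv_eq_iff_eq]
      rw [← e1, ← e2, heq]
    have hπ : π₁ = π₂ := by
      rw [← hA3, ← hB3, heq, hqeq]
    exact Prod.ext hπ hb

lemma key (𝒞 : Finset (Fin 3 → V × V)) (φ : Fin 3 → V × V)
    (hfar : ∀ f ∈ 𝒞, ∀ i j : Fin 3, (f i).1 ≠ (φ j).1 ∧ (f i).2 ≠ (φ j).2)
    (hdd : ∀ i j : Fin 3, i ≠ j → (φ i).1 ≠ (φ j).1)
    (hdr : ∀ i j : Fin 3, i ≠ j → (φ i).2 ≠ (φ j).2) :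
    ((Av 𝒞).filter fun π => occ φ π).card
        * (Fintype.card V * (Fintype.card V - 1) * (Fintype.card V - 2))
      ≤ (Av 𝒞).card := by
  classical
  set n := Fintype.card V with hn
  have h0 := swap_step 𝒞 φ hfar hdd hdr ∅ 0 (by simp)
  have h1 := swap_step 𝒞 φ hfar hdd hdr {0} 1 (by decide)
  have h2 := swap_step 𝒞 φ hfar hdd hdr {0, 1} 2 (by decide)
  have e0 : ((Av 𝒞).filter fun π => ∀ i ∈ (∅ : Finset (Fin 3)), π (φ i).1 = (φ i).2)
      = Av 𝒞 := by
    apply Finset.filter_true_of_mem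
    intro π _ i hi
    simp at hi
  have e1 : (insert (0 : Fin 3) (∅ : Finset (Fin 3))) = {0} := rfl
  have e2 : (insert (1 : Fin 3) ({0} : Finset (Fin 3))) = {0, 1} := by decide
  have e3 : ((Av 𝒞).filter fun π => ∀ i ∈ insert (2 : Fin 3) ({0, 1} : Finset (Fin 3)),
      π (φ i).1 = (φ i).2) = (Av 𝒞).filter fun π => occ φ π := by
    apply Finset.filter_congr
    intro π _
    constructor
    · intro h i
      exact h i (by fin_cases i <;> decide)
    · intro h i _
      exact h i
  rw [e1, e0] at h0
  rw [e2] at h1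
  rw [e3] at h2
  have c0 : ({0} : Finset (Fin 3)).card = 1 := by decide
  have c1 : ({0, 1} : Finset (Fin 3)).card = 2 := by decide
  rw [c0] at h1
  rw [c1] at h2
  simp only [Finset.card_empty, Nat.sub_zero] at h0
  calc ((Av 𝒞).filter fun π => occ φ π).card * (n * (n - 1) * (n - 2))
      = (((Av 𝒞).filter fun π => occ φ π).card * (n - 2)) * (n - 1) * n := by ring
    _ ≤ (((Av 𝒞).filter fun π => ∀ i ∈ ({0, 1} : Finset (Fin 3)),
          π (φ i).1 = (φ i).2).card) * (n - 1) * n := by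
        exact Nat.mul_le_mul_right _ (Nat.mul_le_mul_right _ h2)
    _ ≤ (((Av 𝒞).filter fun π => ∀ i ∈ ({0} : Finset (Fin 3)),
          π (φ i).1 = (φ i).2).card) * n := Nat.mul_le_mul_right _ h1
    _ ≤ (Av 𝒞).card := h0
lemma lll_bound (J : Finset (Fin 3 → V × V))
    (hdd : ∀ f ∈ J, ∀ i j : Fin 3, i ≠ j → (f i).1 ≠ (f j).1)
    (hdr : ∀ f ∈ J, ∀ i j : Fin 3, i ≠ j → (f i).2 ≠ (f j).2)
    (hN : 0 < Fintype.card V * (Fintype.card V - 1) * (Fintype.card V - 2))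
    (hd : ∀ f₀ ∈ J, (J.filter fun f => ∃ i j : Fin 3,
          (f i).1 = (f₀ j).1 ∨ (f i).2 = (f₀ j).2).card * 4
        ≤ Fintype.card V * (Fintype.card V - 1) * (Fintype.card V - 2)) :
    ∀ S : Finset (Fin 3 → V × V), S ⊆ J → ∀ f₀ ∈ J,
      ((Av S).filter fun π => occ f₀ π).card
          * (Fintype.card V * (Fintype.card V - 1) * (Fintype.card V - 2))
        ≤ 2 * (Av S).card := by
  classical
  set N₃ := Fintype.card V * (Fintype.card V - 1) * (Fintype.card V - 2) with hN₃
  intro S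
  induction S using Finset.strongInduction with
  | _ S ih =>
    intro hSJ f₀ hf₀
    set S₁ := S.filter (fun f => ∃ i j : Fin 3, (f i).1 = (f₀ j).1 ∨ (f i).2 = (f₀ j).2)
      with hS₁
    set S₂ := S \ S₁ with hS₂
    have hS₂S : S₂ ⊆ S := Finset.sdiff_subset
    have hS₂J : S₂ ⊆ J := hS₂S.trans hSJ
    have hfar : ∀ f ∈ S₂, ∀ i j : Fin 3, (f i).1 ≠ (f₀ j).1 ∧ (f i).2 ≠ (f₀ j).2 := by
      intro f hf i j
      have hcS : f ∈ S := (Finset.mem_sdiff.mp hf).1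
      have hnc : ¬ (∃ i j : Fin 3, (f i).1 = (f₀ j).1 ∨ (f i).2 = (f₀ j).2) := by
        intro hex
        exact (Finset.mem_sdiff.mp hf).2 (Finset.mem_filter.mpr ⟨hcS, hex⟩)
      push_neg at hnc
      exact hnc i j
    have hkey := key S₂ f₀ hfar (hdd f₀ hf₀) (hdr f₀ hf₀)
    by_cases hS₁e : S₁ = ∅
    · have hSS : S₂ = S := by rw [hS₂, hS₁e, Finset.sdiff_empty]
      rw [hSS] at hkey
      calc ((Av S).filter fun π => occ f₀ π).card * N₃ ≤ (Av S).card := hkey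
        _ ≤ 2 * (Av S).card := by omega
    · have hS₁ne : S₁.Nonempty := Finset.nonempty_iff_ne_empty.mpr hS₁e
      have hssub : S₂ ⊂ S := Finset.sdiff_ssubset (Finset.filter_subset _ _) hS₁ne
      have hsub2 : Av S₂ \ Av S ⊆ S₁.biUnion (fun f => (Av S₂).filter (fun π => occ f π)) := by
        intro π hπ
        rw [Finset.mem_sdiff] at hπ
        obtain ⟨h2, h1⟩ := hπ
        simp only [mem_Av] at h1
        push_neg at h1
        obtain ⟨f, hfS, hocc⟩ := h1
        have hfS₁ : f ∈ S₁ := by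
          by_contra hc1
          exact (mem_Av.mp h2) f (Finset.mem_sdiff.mpr ⟨hfS, hc1⟩) hocc
        exact Finset.mem_biUnion.mpr ⟨f, hfS₁, Finset.mem_filter.mpr ⟨mem_Av.mpr (mem_Av.mp h2), hocc⟩⟩
      have hAvsub : Av S ⊆ Av S₂ := Av_anti hS₂S
      have h1 : (Av S₂).card ≤ (Av S).card + (Av S₂ \ Av S).card := by
        have := Finset.card_sdiff_add_card_eq_card hAvsub
        omega
      have h2 : (Av S₂ \ Av S).card ≤ ∑ f ∈ S₁, ((Av S₂).filter (fun π => occ f π)).card :=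
        (Finset.card_le_card hsub2).trans Finset.card_biUnion_le
      have h3 : ∀ f ∈ S₁, ((Av S₂).filter (fun π => occ f π)).card * N₃ ≤ 2 * (Av S₂).card := by
        intro f hf
        exact ih S₂ hssub hS₂J f (hSJ (Finset.filter_subset _ _ hf))
      have h4 : (Av S₂).card * N₃
          ≤ (Av S).card * N₃ + S₁.card * (2 * (Av S₂).card) := by
        calc (Av S₂).card * N₃ ≤ ((Av S).card + (Av S₂ \ Av S).card) * N₃ :=
              Nat.mul_le_mul_right _ h1
          _ = (Av S).card * N₃ + (Av S₂ \ Av S).card * N₃ := by ring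
          _ ≤ (Av S).card * N₃
              + (∑ f ∈ S₁, ((Av S₂).filter (fun π => occ f π)).card) * N₃ :=
              Nat.add_le_add_left (Nat.mul_le_mul_right _ h2) _
          _ = (Av S).card * N₃
              + ∑ f ∈ S₁, ((Av S₂).filter (fun π => occ f π)).card * N₃ := by
              rw [Finset.sum_mul]
          _ ≤ (Av S).card * N₃ + ∑ _f ∈ S₁, 2 * (Av S₂).card :=
              Nat.add_le_add_left (Finset.sum_le_sum h3) _
          _ = (Av S).card * N₃ + S₁.card * (2 * (Av S₂).card) := by
              rw [Finset.sum_const, smul_eq_mul]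
      have h5 : S₁.card * 4 ≤ N₃ := by
        refine le_trans ?_ (hd f₀ hf₀)
        exact Nat.mul_le_mul_right _
          (Finset.card_le_card (Finset.filter_subset_filter _ hSJ))
      have h6 : (Av S₂).card ≤ 2 * (Av S).card := by
        have h7 : S₁.card * 4 * (Av S₂).card ≤ N₃ * (Av S₂).card :=
          Nat.mul_le_mul_right _ h5
        by_contra hcon
        push_neg at hcon
        nlinarith [h4, h7]
      calc ((Av S).filter fun π => occ f₀ π).card * N₃
          ≤ ((Av S₂).filter fun π => occ f₀ π).card * N₃ :=
            Nat.mul_le_mul_right _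
              (Finset.card_le_card (Finset.filter_subset_filter _ hAvsub))
        _ ≤ (Av S₂).card := hkey
        _ ≤ 2 * (Av S).card := h6

lemma lll_exists (J : Finset (Fin 3 → V × V))
    (hdd : ∀ f ∈ J, ∀ i j : Fin 3, i ≠ j → (f i).1 ≠ (f j).1)
    (hdr : ∀ f ∈ J, ∀ i j : Fin 3, i ≠ j → (f i).2 ≠ (f j).2)
    (hN : 3 ≤ Fintype.card V * (Fintype.card V - 1) * (Fintype.card V - 2))
    (hd : ∀ f₀ ∈ J, (J.filter fun f => ∃ i j : Fin 3,
          (f i).1 = (f₀ j).1 ∨ (f i).2 = (f₀ j).2).card * 4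
        ≤ Fintype.card V * (Fintype.card V - 1) * (Fintype.card V - 2)) :
    ∃ π : Equiv.Perm V, ∀ f ∈ J, ¬ occ f π := by
  classical
  have hN0 : 0 < Fintype.card V * (Fintype.card V - 1) * (Fintype.card V - 2) := by omega
  have hpos : ∀ S : Finset (Fin 3 → V × V), S ⊆ J → 0 < (Av S).card := by
    intro S
    induction S using Finset.induction_on with
    | empty =>
      intro _
      refine Finset.card_pos.mpr ⟨1, ?_⟩
      rw [mem_Av]
      intro f hf
      simp at hf
    | @insert a S ha ih =>
      intro hsub
      have hS : S ⊆ J := (Finset.subset_insert a S).trans hsub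
      have haJ : a ∈ J := hsub (Finset.mem_insert_self _ _)
      have ihS := ih hS
      by_contra h0
      push_neg at h0
      have hempty : Av (insert a S) = ∅ := Finset.card_eq_zero.mp (Nat.le_zero.mp h0)
      have hsub2 : Av S ⊆ (Av S).filter (fun π => occ a π) := by
        intro π hπ
        rw [Finset.mem_filter]
        refine ⟨hπ, ?_⟩
        by_contra hno
        have hmem : π ∈ Av (insert a S) := by
          rw [mem_Av]
          intro f hf
          rcases Finset.mem_insert.mp hf with rfl | h
          · exact hno
          · exact mem_Av.mp hπ f h
        rw [hempty] at hmem
        exact absurd hmem (Finset.notMem_empty π)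
      have hb := lll_bound J hdd hdr hN0 hd S hS a haJ
      have hcard : (Av S).card ≤ ((Av S).filter (fun π => occ a π)).card :=
        Finset.card_le_card hsub2
      have : (Av S).card * 3 ≤ 2 * (Av S).card := by
        calc (Av S).card * 3 ≤ (Av S).card
              * (Fintype.card V * (Fintype.card V - 1) * (Fintype.card V - 2)) :=
            Nat.mul_le_mul_left _ hN
          _ ≤ ((Av S).filter (fun π => occ a π)).card
              * (Fintype.card V * (Fintype.card V - 1) * (Fintype.card V - 2)) :=
            Nat.mul_le_mul_right _ hcard
          _ ≤ 2 * (Av S).card := hb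
      omega
  have := hpos J Finset.Subset.rfl
  obtain ⟨π, hπ⟩ := Finset.card_pos.mp this
  exact ⟨π, mem_Av.mp hπ⟩
lemma pair3 {α : Type*} (g : Fin 3 → α) (h01 : g 0 ≠ g 1) (h02 : g 0 ≠ g 2)
    (h12 : g 1 ≠ g 2) : ∀ i j : Fin 3, i ≠ j → g i ≠ g j := by
  intro i j hij
  fin_cases i <;> fin_cases j <;>
    first
      | exact absurd rfl hij
      | exact h01
      | exact h02
      | exact h12
      | exact h01.symm
      | exact h02.symm
      | exact h12.symm


section Count
variable {n : ℕ} (G : SimpleGraph (Fin n)) {C : Type} (χ : Sym2 (Fin n) → C) (k Dn : ℕ)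

open scoped Classical in
noncomputable def nbr (x : Fin n) : Finset (Fin n) := univ.filter fun y => G.Adj x y
open scoped Classical in
noncomputable def colcls (a : Fin n) (col : C) : Finset (Fin n) :=
  univ.filter fun u => u ≠ a ∧ χ s(a, u) = col
open scoped Classical in
noncomputable def JJ : Finset (Fin 3 → Fin n × Fin n) :=
  univ.filter fun f =>
    G.Adj (f 0).1 (f 1).1 ∧ G.Adj (f 0).1 (f 2).1 ∧ (f 1).1 ≠ (f 2).1 ∧
    (f 0).2 ≠ (f 1).2 ∧ (f 0).2 ≠ (f 2).2 ∧ (f 1).2 ≠ (f 2).2 ∧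
    χ s((f 0).2, (f 1).2) = χ s((f 0).2, (f 2).2)

lemma mem_JJ {f : Fin 3 → Fin n × Fin n} : f ∈ JJ G χ ↔
    G.Adj (f 0).1 (f 1).1 ∧ G.Adj (f 0).1 (f 2).1 ∧ (f 1).1 ≠ (f 2).1 ∧
    (f 0).2 ≠ (f 1).2 ∧ (f 0).2 ≠ (f 2).2 ∧ (f 1).2 ≠ (f 2).2 ∧
    χ s((f 0).2, (f 1).2) = χ s((f 0).2, (f 2).2) := by
  simp [JJ]

lemma mem_nbr {x y : Fin n} : y ∈ nbr G x ↔ G.Adj x y := by simp [nbr]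

lemma mem_colcls {a u : Fin n} {col : C} : u ∈ colcls χ a col ↔ u ≠ a ∧ χ s(a, u) = col := by
  simp [colcls]

variable (hnbr : ∀ x, (nbr G x).card ≤ Dn) (hcol : ∀ a col, (colcls χ a col).card ≤ k)

include hnbr hcol in
lemma bA0 (v : Fin n) :
    ((JJ G χ).filter fun f => (f 0).1 = v).card ≤ (Dn * (Dn * k)) * (n * n) := by
  classical
  have hmain := Finset.card_le_mul_card_image_of_maps_to
    (f := fun f : Fin 3 → Fin n × Fin n => ((f 0).2, (f 1).2))
    (s := (JJ G χ).filter fun f => (f 0).1 = v)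
    (t := (univ : Finset (Fin n × Fin n)))
    (fun _ _ => mem_univ _) (Dn * (Dn * k)) ?_
  · refine hmain.trans ?_
    simp
  · rintro ⟨a, b⟩ _
    have hinj : Set.InjOn (fun f : Fin 3 → Fin n × Fin n => ((f 1).1, ((f 2).1, (f 2).2)))
        ↑((((JJ G χ).filter fun f => (f 0).1 = v)).filter
            fun f => ((f 0).2, (f 1).2) = (a, b)) := by
      intro f hf f' hf' heq
      simp only [Finset.coe_filter, Set.mem_setOf_eq, Finset.mem_filter, Prod.mk.injEq] at hf hf'
      simp only [Prod.mk.injEq] at heq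
      obtain ⟨⟨-, h0⟩, ha, hb⟩ := hf
      obtain ⟨⟨-, h0'⟩, ha', hb'⟩ := hf'
      funext i
      fin_cases i
      · exact Prod.ext (h0.trans h0'.symm) (ha.trans ha'.symm)
      · exact Prod.ext heq.1 (hb.trans hb'.symm)
      · exact Prod.ext heq.2.1 heq.2.2
    have hmaps : ∀ f ∈ (((JJ G χ).filter fun f => (f 0).1 = v)).filter
        (fun f => ((f 0).2, (f 1).2) = (a, b)),
        (fun f : Fin 3 → Fin n × Fin n => ((f 1).1, ((f 2).1, (f 2).2))) f ∈
          nbr G v ×ˢ (nbr G v ×ˢ colcls χ a (χ s(a, b))) := by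
      intro f hf
      simp only [Finset.mem_filter, Prod.mk.injEq] at hf
      obtain ⟨⟨hJ, h0⟩, ha, hb⟩ := hf
      rw [mem_JJ] at hJ
      obtain ⟨hxy, hxz, -, -, h02, -, hcc⟩ := hJ
      simp only [Finset.mem_product, mem_nbr, mem_colcls]
      refine ⟨by rw [← h0]; exact hxy, by rw [← h0]; exact hxz, ?_, ?_⟩
      · rw [← ha]; exact fun h => h02 h.symm
      · rw [← ha, ← hb]; exact hcc.symm
    refine le_trans (Finset.card_le_card_of_injOn _ hmaps hinj) ?_
    rw [Finset.card_product, Finset.card_product]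
    exact Nat.mul_le_mul (hnbr v) (Nat.mul_le_mul (hnbr v) (hcol _ _))

include hnbr hcol in
lemma bP1 (x v : Fin n) :
    ((JJ G χ).filter fun f => (f 0).1 = x ∧ (f 1).1 = v).card ≤ (Dn * k) * (n * n) := by
  classical
  have hmain := Finset.card_le_mul_card_image_of_maps_to
    (f := fun f : Fin 3 → Fin n × Fin n => ((f 0).2, (f 1).2))
    (s := (JJ G χ).filter fun f => (f 0).1 = x ∧ (f 1).1 = v)
    (t := (univ : Finset (Fin n × Fin n)))
    (fun _ _ => mem_univ _) (Dn * k) ?_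
  · refine hmain.trans ?_
    simp
  · rintro ⟨a, b⟩ _
    have hinj : Set.InjOn (fun f : Fin 3 → Fin n × Fin n => ((f 2).1, (f 2).2))
        ↑((((JJ G χ).filter fun f => (f 0).1 = x ∧ (f 1).1 = v)).filter
            fun f => ((f 0).2, (f 1).2) = (a, b)) := by
      intro f hf f' hf' heq
      simp only [Finset.coe_filter, Set.mem_setOf_eq, Finset.mem_filter, Prod.mk.injEq] at hf hf'
      simp only [Prod.mk.injEq] at heq
      obtain ⟨⟨-, h0, h1⟩, ha, hb⟩ := hf
      obtain ⟨⟨-, h0', h1'⟩, ha', hb'⟩ := hf'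
      funext i
      fin_cases i
      · exact Prod.ext (h0.trans h0'.symm) (ha.trans ha'.symm)
      · exact Prod.ext (h1.trans h1'.symm) (hb.trans hb'.symm)
      · exact Prod.ext heq.1 heq.2
    have hmaps : ∀ f ∈ (((JJ G χ).filter fun f => (f 0).1 = x ∧ (f 1).1 = v)).filter
        (fun f => ((f 0).2, (f 1).2) = (a, b)),
        (fun f : Fin 3 → Fin n × Fin n => ((f 2).1, (f 2).2)) f ∈
          nbr G x ×ˢ colcls χ a (χ s(a, b)) := by
      intro f hf
      simp only [Finset.mem_filter, Prod.mk.injEq] at hf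
      obtain ⟨⟨hJ, h0, h1⟩, ha, hb⟩ := hf
      rw [mem_JJ] at hJ
      obtain ⟨hxy, hxz, -, -, h02, -, hcc⟩ := hJ
      simp only [Finset.mem_product, mem_nbr, mem_colcls]
      refine ⟨by rw [← h0]; exact hxz, ?_, ?_⟩
      · rw [← ha]; exact fun h => h02 h.symm
      · rw [← ha, ← hb]; exact hcc.symm
    refine le_trans (Finset.card_le_card_of_injOn _ hmaps hinj) ?_
    rw [Finset.card_product]
    exact Nat.mul_le_mul (hnbr x) (hcol _ _)

include hnbr hcol in
lemma bP2 (x v : Fin n) :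
    ((JJ G χ).filter fun f => (f 0).1 = x ∧ (f 2).1 = v).card ≤ (Dn * k) * (n * n) := by
  classical
  have hmain := Finset.card_le_mul_card_image_of_maps_to
    (f := fun f : Fin 3 → Fin n × Fin n => ((f 0).2, (f 1).2))
    (s := (JJ G χ).filter fun f => (f 0).1 = x ∧ (f 2).1 = v)
    (t := (univ : Finset (Fin n × Fin n)))
    (fun _ _ => mem_univ _) (Dn * k) ?_
  · refine hmain.trans ?_
    simp
  · rintro ⟨a, b⟩ _
    have hinj : Set.InjOn (fun f : Fin 3 → Fin n × Fin n => ((f 1).1, (f 2).2))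
        ↑((((JJ G χ).filter fun f => (f 0).1 = x ∧ (f 2).1 = v)).filter
            fun f => ((f 0).2, (f 1).2) = (a, b)) := by
      intro f hf f' hf' heq
      simp only [Finset.coe_filter, Set.mem_setOf_eq, Finset.mem_filter, Prod.mk.injEq] at hf hf'
      simp only [Prod.mk.injEq] at heq
      obtain ⟨⟨-, h0, h1⟩, ha, hb⟩ := hf
      obtain ⟨⟨-, h0', h1'⟩, ha', hb'⟩ := hf'
      funext i
      fin_cases i
      · exact Prod.ext (h0.trans h0'.symm) (ha.trans ha'.symm)
      · exact Prod.ext heq.1 (hb.trans hb'.symm)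
      · exact Prod.ext (h1.trans h1'.symm) heq.2
    have hmaps : ∀ f ∈ (((JJ G χ).filter fun f => (f 0).1 = x ∧ (f 2).1 = v)).filter
        (fun f => ((f 0).2, (f 1).2) = (a, b)),
        (fun f : Fin 3 → Fin n × Fin n => ((f 1).1, (f 2).2)) f ∈
          nbr G x ×ˢ colcls χ a (χ s(a, b)) := by
      intro f hf
      simp only [Finset.mem_filter, Prod.mk.injEq] at hf
      obtain ⟨⟨hJ, h0, h1⟩, ha, hb⟩ := hf
      rw [mem_JJ] at hJ
      obtain ⟨hxy, hxz, -, -, h02, -, hcc⟩ := hJ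
      simp only [Finset.mem_product, mem_nbr, mem_colcls]
      refine ⟨by rw [← h0]; exact hxy, ?_, ?_⟩
      · rw [← ha]; exact fun h => h02 h.symm
      · rw [← ha, ← hb]; exact hcc.symm
    refine le_trans (Finset.card_le_card_of_injOn _ hmaps hinj) ?_
    rw [Finset.card_product]
    exact Nat.mul_le_mul (hnbr x) (hcol _ _)

include hnbr hcol in
lemma bA1 (v : Fin n) :
    ((JJ G χ).filter fun f => (f 1).1 = v).card ≤ Dn * ((Dn * k) * (n * n)) := by
  classical
  have hsub : ((JJ G χ).filter fun f => (f 1).1 = v) ⊆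
      (nbr G v).biUnion fun x => (JJ G χ).filter fun f => (f 0).1 = x ∧ (f 1).1 = v := by
    intro f hf
    rw [Finset.mem_filter] at hf
    obtain ⟨hJ, h1⟩ := hf
    have hxy := (mem_JJ G χ |>.mp hJ).1
    rw [Finset.mem_biUnion]
    exact ⟨(f 0).1, (mem_nbr G).mpr (by rw [← h1]; exact hxy.symm),
      Finset.mem_filter.mpr ⟨hJ, rfl, h1⟩⟩
  calc ((JJ G χ).filter fun f => (f 1).1 = v).card
      ≤ ((nbr G v).biUnion fun x => (JJ G χ).filter fun f =>
          (f 0).1 = x ∧ (f 1).1 = v).card := Finset.card_le_card hsub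
    _ ≤ ∑ x ∈ nbr G v, ((JJ G χ).filter fun f => (f 0).1 = x ∧ (f 1).1 = v).card :=
        Finset.card_biUnion_le
    _ ≤ ∑ _x ∈ nbr G v, (Dn * k) * (n * n) :=
        Finset.sum_le_sum fun x _ => bP1 G χ k Dn hnbr hcol x v
    _ = (nbr G v).card * ((Dn * k) * (n * n)) := by rw [Finset.sum_const, smul_eq_mul]
    _ ≤ Dn * ((Dn * k) * (n * n)) := Nat.mul_le_mul_right _ (hnbr v)

include hnbr hcol in
lemma bA2 (v : Fin n) :
    ((JJ G χ).filter fun f => (f 2).1 = v).card ≤ Dn * ((Dn * k) * (n * n)) := by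
  classical
  have hsub : ((JJ G χ).filter fun f => (f 2).1 = v) ⊆
      (nbr G v).biUnion fun x => (JJ G χ).filter fun f => (f 0).1 = x ∧ (f 2).1 = v := by
    intro f hf
    rw [Finset.mem_filter] at hf
    obtain ⟨hJ, h1⟩ := hf
    have hxz := (mem_JJ G χ |>.mp hJ).2.1
    rw [Finset.mem_biUnion]
    exact ⟨(f 0).1, (mem_nbr G).mpr (by rw [← h1]; exact hxz.symm),
      Finset.mem_filter.mpr ⟨hJ, rfl, h1⟩⟩
  calc ((JJ G χ).filter fun f => (f 2).1 = v).card
      ≤ ((nbr G v).biUnion fun x => (JJ G χ).filter fun f =>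
          (f 0).1 = x ∧ (f 2).1 = v).card := Finset.card_le_card hsub
    _ ≤ ∑ x ∈ nbr G v, ((JJ G χ).filter fun f => (f 0).1 = x ∧ (f 2).1 = v).card :=
        Finset.card_biUnion_le
    _ ≤ ∑ _x ∈ nbr G v, (Dn * k) * (n * n) :=
        Finset.sum_le_sum fun x _ => bP2 G χ k Dn hnbr hcol x v
    _ = (nbr G v).card * ((Dn * k) * (n * n)) := by rw [Finset.sum_const, smul_eq_mul]
    _ ≤ Dn * ((Dn * k) * (n * n)) := Nat.mul_le_mul_right _ (hnbr v)

include hnbr hcol in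
lemma bB0 (w : Fin n) :
    ((JJ G χ).filter fun f => (f 0).2 = w).card ≤ (Dn * (Dn * k)) * (n * n) := by
  classical
  have hmain := Finset.card_le_mul_card_image_of_maps_to
    (f := fun f : Fin 3 → Fin n × Fin n => ((f 0).1, (f 1).2))
    (s := (JJ G χ).filter fun f => (f 0).2 = w)
    (t := (univ : Finset (Fin n × Fin n)))
    (fun _ _ => mem_univ _) (Dn * (Dn * k)) ?_
  · refine hmain.trans ?_
    simp
  · rintro ⟨x, b⟩ _
    have hinj : Set.InjOn (fun f : Fin 3 → Fin n × Fin n => ((f 1).1, ((f 2).1, (f 2).2)))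
        ↑((((JJ G χ).filter fun f => (f 0).2 = w)).filter
            fun f => ((f 0).1, (f 1).2) = (x, b)) := by
      intro f hf f' hf' heq
      simp only [Finset.coe_filter, Set.mem_setOf_eq, Finset.mem_filter, Prod.mk.injEq] at hf hf'
      simp only [Prod.mk.injEq] at heq
      obtain ⟨⟨-, h0⟩, ha, hb⟩ := hf
      obtain ⟨⟨-, h0'⟩, ha', hb'⟩ := hf'
      funext i
      fin_cases i
      · exact Prod.ext (ha.trans ha'.symm) (h0.trans h0'.symm)
      · exact Prod.ext heq.1 (hb.trans hb'.symm)
      · exact Prod.ext heq.2.1 heq.2.2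
    have hmaps : ∀ f ∈ (((JJ G χ).filter fun f => (f 0).2 = w)).filter
        (fun f => ((f 0).1, (f 1).2) = (x, b)),
        (fun f : Fin 3 → Fin n × Fin n => ((f 1).1, ((f 2).1, (f 2).2))) f ∈
          nbr G x ×ˢ (nbr G x ×ˢ colcls χ w (χ s(w, b))) := by
      intro f hf
      simp only [Finset.mem_filter, Prod.mk.injEq] at hf
      obtain ⟨⟨hJ, h0⟩, ha, hb⟩ := hf
      rw [mem_JJ] at hJ
      obtain ⟨hxy, hxz, -, -, h02, -, hcc⟩ := hJ
      simp only [Finset.mem_product, mem_nbr, mem_colcls]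
      refine ⟨by rw [← ha]; exact hxy, by rw [← ha]; exact hxz, ?_, ?_⟩
      · rw [← h0]; exact fun h => h02 h.symm
      · rw [← h0, ← hb]; exact hcc.symm
    refine le_trans (Finset.card_le_card_of_injOn _ hmaps hinj) ?_
    rw [Finset.card_product, Finset.card_product]
    exact Nat.mul_le_mul (hnbr x) (Nat.mul_le_mul (hnbr x) (hcol _ _))

include hnbr hcol in
lemma bB1 (w : Fin n) :
    ((JJ G χ).filter fun f => (f 1).2 = w).card ≤ (Dn * (Dn * k)) * (n * n) := by
  classical
  have hmain := Finset.card_le_mul_card_image_of_maps_to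
    (f := fun f : Fin 3 → Fin n × Fin n => ((f 0).1, (f 0).2))
    (s := (JJ G χ).filter fun f => (f 1).2 = w)
    (t := (univ : Finset (Fin n × Fin n)))
    (fun _ _ => mem_univ _) (Dn * (Dn * k)) ?_
  · refine hmain.trans ?_
    simp
  · rintro ⟨x, a⟩ _
    have hinj : Set.InjOn (fun f : Fin 3 → Fin n × Fin n => ((f 1).1, ((f 2).1, (f 2).2)))
        ↑((((JJ G χ).filter fun f => (f 1).2 = w)).filter
            fun f => ((f 0).1, (f 0).2) = (x, a)) := by
      intro f hf f' hf' heq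
      simp only [Finset.coe_filter, Set.mem_setOf_eq, Finset.mem_filter, Prod.mk.injEq] at hf hf'
      simp only [Prod.mk.injEq] at heq
      obtain ⟨⟨-, h0⟩, ha, hb⟩ := hf
      obtain ⟨⟨-, h0'⟩, ha', hb'⟩ := hf'
      funext i
      fin_cases i
      · exact Prod.ext (ha.trans ha'.symm) (hb.trans hb'.symm)
      · exact Prod.ext heq.1 (h0.trans h0'.symm)
      · exact Prod.ext heq.2.1 heq.2.2
    have hmaps : ∀ f ∈ (((JJ G χ).filter fun f => (f 1).2 = w)).filter
        (fun f => ((f 0).1, (f 0).2) = (x, a)),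
        (fun f : Fin 3 → Fin n × Fin n => ((f 1).1, ((f 2).1, (f 2).2))) f ∈
          nbr G x ×ˢ (nbr G x ×ˢ colcls χ a (χ s(a, w))) := by
      intro f hf
      simp only [Finset.mem_filter, Prod.mk.injEq] at hf
      obtain ⟨⟨hJ, h0⟩, ha, hb⟩ := hf
      rw [mem_JJ] at hJ
      obtain ⟨hxy, hxz, -, -, h02, -, hcc⟩ := hJ
      simp only [Finset.mem_product, mem_nbr, mem_colcls]
      refine ⟨by rw [← ha]; exact hxy, by rw [← ha]; exact hxz, ?_, ?_⟩
      · rw [← hb]; exact fun h => h02 h.symm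
      · rw [← hb, ← h0]; exact hcc.symm
    refine le_trans (Finset.card_le_card_of_injOn _ hmaps hinj) ?_
    rw [Finset.card_product, Finset.card_product]
    exact Nat.mul_le_mul (hnbr x) (Nat.mul_le_mul (hnbr x) (hcol _ _))

include hnbr hcol in
lemma bB2 (w : Fin n) :
    ((JJ G χ).filter fun f => (f 2).2 = w).card ≤ (Dn * (Dn * k)) * (n * n) := by
  classical
  have hmain := Finset.card_le_mul_card_image_of_maps_to
    (f := fun f : Fin 3 → Fin n × Fin n => ((f 0).1, (f 0).2))
    (s := (JJ G χ).filter fun f => (f 2).2 = w)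
    (t := (univ : Finset (Fin n × Fin n)))
    (fun _ _ => mem_univ _) (Dn * (Dn * k)) ?_
  · refine hmain.trans ?_
    simp
  · rintro ⟨x, a⟩ _
    have hinj : Set.InjOn (fun f : Fin 3 → Fin n × Fin n => ((f 1).1, ((f 2).1, (f 1).2)))
        ↑((((JJ G χ).filter fun f => (f 2).2 = w)).filter
            fun f => ((f 0).1, (f 0).2) = (x, a)) := by
      intro f hf f' hf' heq
      simp only [Finset.coe_filter, Set.mem_setOf_eq, Finset.mem_filter, Prod.mk.injEq] at hf hf'
      simp only [Prod.mk.injEq] at heq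
      obtain ⟨⟨-, h0⟩, ha, hb⟩ := hf
      obtain ⟨⟨-, h0'⟩, ha', hb'⟩ := hf'
      funext i
      fin_cases i
      · exact Prod.ext (ha.trans ha'.symm) (hb.trans hb'.symm)
      · exact Prod.ext heq.1 heq.2.2
      · exact Prod.ext heq.2.1 (h0.trans h0'.symm)
    have hmaps : ∀ f ∈ (((JJ G χ).filter fun f => (f 2).2 = w)).filter
        (fun f => ((f 0).1, (f 0).2) = (x, a)),
        (fun f : Fin 3 → Fin n × Fin n => ((f 1).1, ((f 2).1, (f 1).2))) f ∈
          nbr G x ×ˢ (nbr G x ×ˢ colcls χ a (χ s(a, w))) := by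
      intro f hf
      simp only [Finset.mem_filter, Prod.mk.injEq] at hf
      obtain ⟨⟨hJ, h0⟩, ha, hb⟩ := hf
      rw [mem_JJ] at hJ
      obtain ⟨hxy, hxz, -, h01, -, -, hcc⟩ := hJ
      simp only [Finset.mem_product, mem_nbr, mem_colcls]
      refine ⟨by rw [← ha]; exact hxy, by rw [← ha]; exact hxz, ?_, ?_⟩
      · rw [← hb]; exact fun h => h01 h.symm
      · rw [← hb, ← h0]; exact hcc
    refine le_trans (Finset.card_le_card_of_injOn _ hmaps hinj) ?_
    rw [Finset.card_product, Finset.card_product]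
    exact Nat.mul_le_mul (hnbr x) (Nat.mul_le_mul (hnbr x) (hcol _ _))


include hnbr hcol in
lemma bConf (f₀ : Fin 3 → Fin n × Fin n) :
    ((JJ G χ).filter fun f => ∃ i j : Fin 3,
        (f i).1 = (f₀ j).1 ∨ (f i).2 = (f₀ j).2).card
      ≤ 18 * ((Dn * (Dn * k)) * (n * n)) := by
  classical
  set M := (Dn * (Dn * k)) * (n * n) with hM
  have hdom : ∀ v : Fin n,
      ((JJ G χ).filter fun f => ∃ i : Fin 3, (f i).1 = v).card ≤ 3 * M := by
    intro v
    have hsub : ((JJ G χ).filter fun f => ∃ i : Fin 3, (f i).1 = v) ⊆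
        (((JJ G χ).filter fun f => (f 0).1 = v) ∪ ((JJ G χ).filter fun f => (f 1).1 = v))
          ∪ ((JJ G χ).filter fun f => (f 2).1 = v) := by
      intro f hf
      rw [Finset.mem_filter] at hf
      obtain ⟨hJ, i, hi⟩ := hf
      simp only [Finset.mem_union, Finset.mem_filter]
      fin_cases i
      · exact Or.inl (Or.inl ⟨hJ, hi⟩)
      · exact Or.inl (Or.inr ⟨hJ, hi⟩)
      · exact Or.inr ⟨hJ, hi⟩
    calc ((JJ G χ).filter fun f => ∃ i : Fin 3, (f i).1 = v).card
        ≤ ((((JJ G χ).filter fun f => (f 0).1 = v)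
            ∪ ((JJ G χ).filter fun f => (f 1).1 = v))
            ∪ ((JJ G χ).filter fun f => (f 2).1 = v)).card := Finset.card_le_card hsub
      _ ≤ (((JJ G χ).filter fun f => (f 0).1 = v)
            ∪ ((JJ G χ).filter fun f => (f 1).1 = v)).card
          + ((JJ G χ).filter fun f => (f 2).1 = v).card := Finset.card_union_le _ _
      _ ≤ (((JJ G χ).filter fun f => (f 0).1 = v).card
          + ((JJ G χ).filter fun f => (f 1).1 = v).card)
          + ((JJ G χ).filter fun f => (f 2).1 = v).card :=
          Nat.add_le_add_right (Finset.card_union_le _ _) _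
      _ ≤ (M + M) + M := by
          have h1 := bA1 G χ k Dn hnbr hcol v
          have h2 := bA2 G χ k Dn hnbr hcol v
          rw [← mul_assoc] at h1 h2
          exact Nat.add_le_add (Nat.add_le_add (bA0 G χ k Dn hnbr hcol v) h1) h2
      _ = 3 * M := by ring
  have hran : ∀ w : Fin n,
      ((JJ G χ).filter fun f => ∃ i : Fin 3, (f i).2 = w).card ≤ 3 * M := by
    intro w
    have hsub : ((JJ G χ).filter fun f => ∃ i : Fin 3, (f i).2 = w) ⊆
        (((JJ G χ).filter fun f => (f 0).2 = w) ∪ ((JJ G χ).filter fun f => (f 1).2 = w))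
          ∪ ((JJ G χ).filter fun f => (f 2).2 = w) := by
      intro f hf
      rw [Finset.mem_filter] at hf
      obtain ⟨hJ, i, hi⟩ := hf
      simp only [Finset.mem_union, Finset.mem_filter]
      fin_cases i
      · exact Or.inl (Or.inl ⟨hJ, hi⟩)
      · exact Or.inl (Or.inr ⟨hJ, hi⟩)
      · exact Or.inr ⟨hJ, hi⟩
    calc ((JJ G χ).filter fun f => ∃ i : Fin 3, (f i).2 = w).card
        ≤ ((((JJ G χ).filter fun f => (f 0).2 = w)
            ∪ ((JJ G χ).filter fun f => (f 1).2 = w))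
            ∪ ((JJ G χ).filter fun f => (f 2).2 = w)).card := Finset.card_le_card hsub
      _ ≤ (((JJ G χ).filter fun f => (f 0).2 = w)
            ∪ ((JJ G χ).filter fun f => (f 1).2 = w)).card
          + ((JJ G χ).filter fun f => (f 2).2 = w).card := Finset.card_union_le _ _
      _ ≤ (((JJ G χ).filter fun f => (f 0).2 = w).card
          + ((JJ G χ).filter fun f => (f 1).2 = w).card)
          + ((JJ G χ).filter fun f => (f 2).2 = w).card :=
          Nat.add_le_add_right (Finset.card_union_le _ _) _
      _ ≤ (M + M) + M :=
          Nat.add_le_add (Nat.add_le_add (bB0 G χ k Dn hnbr hcol w) (bB1 G χ k Dn hnbr hcol w)) (bB2 G χ k Dn hnbr hcol w)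
      _ = 3 * M := by ring
  have hsub : ((JJ G χ).filter fun f => ∃ i j : Fin 3,
      (f i).1 = (f₀ j).1 ∨ (f i).2 = (f₀ j).2) ⊆
      (univ : Finset (Fin 3)).biUnion fun j =>
        ((JJ G χ).filter fun f => ∃ i : Fin 3, (f i).1 = (f₀ j).1)
          ∪ ((JJ G χ).filter fun f => ∃ i : Fin 3, (f i).2 = (f₀ j).2) := by
    intro f hf
    rw [Finset.mem_filter] at hf
    obtain ⟨hJ, i, j, hij⟩ := hf
    rw [Finset.mem_biUnion]
    refine ⟨j, mem_univ _, ?_⟩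
    rw [Finset.mem_union]
    rcases hij with h | h
    · exact Or.inl (Finset.mem_filter.mpr ⟨hJ, i, h⟩)
    · exact Or.inr (Finset.mem_filter.mpr ⟨hJ, i, h⟩)
  calc ((JJ G χ).filter fun f => ∃ i j : Fin 3,
        (f i).1 = (f₀ j).1 ∨ (f i).2 = (f₀ j).2).card
      ≤ ∑ j : Fin 3, (((JJ G χ).filter fun f => ∃ i : Fin 3, (f i).1 = (f₀ j).1)
          ∪ ((JJ G χ).filter fun f => ∃ i : Fin 3, (f i).2 = (f₀ j).2)).card :=
        (Finset.card_le_card hsub).trans Finset.card_biUnion_le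
    _ ≤ ∑ _j : Fin 3, 6 * M := by
        refine Finset.sum_le_sum fun j _ => ?_
        calc (((JJ G χ).filter fun f => ∃ i : Fin 3, (f i).1 = (f₀ j).1)
              ∪ ((JJ G χ).filter fun f => ∃ i : Fin 3, (f i).2 = (f₀ j).2)).card
            ≤ ((JJ G χ).filter fun f => ∃ i : Fin 3, (f i).1 = (f₀ j).1).card
              + ((JJ G χ).filter fun f => ∃ i : Fin 3, (f i).2 = (f₀ j).2).card :=
              Finset.card_union_le _ _
          _ ≤ 3 * M + 3 * M := Nat.add_le_add (hdom _) (hran _)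
          _ = 6 * M := by ring
    _ = 18 * M := by
        rw [Finset.sum_const, smul_eq_mul]
        simp
        ring
end Count

end PCC

open PCC in
/-- For every positive integer `k` there are `c > 0` and `n₀` such that for all `n ≥ n₀`:
every graph `G` on `n` vertices with maximum degree at most `c·√n` has a properly coloured
copy in every locally `k`-bounded edge colouring of `K_n`. -/
theorem properly_coloured_copy_max_degree_sqrt :
    ∀ k : ℕ, 0 < k → ∃ c : ℝ, 0 < c ∧ ∃ n₀ : ℕ, ∀ n : ℕ, n₀ ≤ n →
      ∀ G : SimpleGraph (Fin n),
        (∀ v : Fin n, ((G.neighborSet v).ncard : ℝ) ≤ c * Real.sqrt n) →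
        ∀ (C : Type) (χ : Sym2 (Fin n) → C),
          (∀ (v : Fin n) (col : C), {u : Fin n | u ≠ v ∧ χ s(v, u) = col}.ncard ≤ k) →
          ∃ σ : Fin n ↪ Fin n, ∀ x y z : Fin n, G.Adj x y → G.Adj x z → y ≠ z →
            χ s(σ x, σ y) ≠ χ s(σ x, σ z) := by
  intro k hk
  refine ⟨1 / (24 * k), by positivity, 10, ?_⟩
  intro n hn G hdeg C χ hloc
  classical
  set Dn : ℕ := ⌊(1 / (24 * (k : ℝ))) * Real.sqrt n⌋₊ with hDndef
  have hnbr : ∀ x, (nbr G x).card ≤ Dn := by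
    intro x
    apply Nat.le_floor
    refine le_trans (le_of_eq ?_) (hdeg x)
    norm_cast
    have h : G.neighborSet x = ↑(nbr G x) := by
      ext u; simp [nbr, SimpleGraph.mem_neighborSet]
    rw [h, Set.ncard_coe_finset]
  have hcol : ∀ a col, (colcls χ a col).card ≤ k := by
    intro a col
    have h := hloc a col
    have h2 : {u : Fin n | u ≠ a ∧ χ s(a, u) = col} = ↑(colcls χ a col) := by
      ext u; simp [colcls]
    rwa [h2, Set.ncard_coe_finset] at h
  -- numeric bound
  have hnum : 18 * ((Dn * (Dn * k)) * (n * n)) * 4 ≤ n * (n - 1) * (n - 2) := by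
    have h1n : (1 : ℕ) ≤ n := by omega
    have h2n : (2 : ℕ) ≤ n := by omega
    rw [← Nat.cast_le (α := ℝ)]
    push_cast [Nat.cast_sub h1n, Nat.cast_sub h2n]
    set N : ℝ := (n : ℝ) with hN
    have hN10 : (10 : ℝ) ≤ N := by
      rw [hN]; exact_mod_cast hn
    have hk1 : (1 : ℝ) ≤ (k : ℝ) := by exact_mod_cast hk
    have hDd : (Dn : ℝ) ≤ (1 / (24 * (k : ℝ))) * Real.sqrt N := by
      rw [hDndef]
      exact Nat.floor_le (by positivity)
    have hsq : Real.sqrt N * Real.sqrt N = N :=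
      Real.mul_self_sqrt (by linarith)
    have hDnn : (0 : ℝ) ≤ (Dn : ℝ) := Nat.cast_nonneg _
    have h576 : 576 * (k : ℝ) ^ 2 * ((Dn : ℝ) * (Dn : ℝ)) ≤ N := by
      have hkpos : (0 : ℝ) < 24 * (k : ℝ) := by positivity
      have h3 : (24 * (k : ℝ)) * (Dn : ℝ) ≤ Real.sqrt N := by
        have h4 : (24 * (k : ℝ)) * ((1 / (24 * (k : ℝ))) * Real.sqrt N) = Real.sqrt N := by
          field_simp
        calc (24 * (k : ℝ)) * (Dn : ℝ)
            ≤ (24 * (k : ℝ)) * ((1 / (24 * (k : ℝ))) * Real.sqrt N) :=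
              mul_le_mul_of_nonneg_left hDd (le_of_lt hkpos)
          _ = Real.sqrt N := h4
      have h5 : ((24 * (k : ℝ)) * (Dn : ℝ)) * ((24 * (k : ℝ)) * (Dn : ℝ))
          ≤ Real.sqrt N * Real.sqrt N :=
        mul_le_mul h3 h3 (by positivity) (Real.sqrt_nonneg N)
      rw [hsq] at h5
      calc 576 * (k : ℝ) ^ 2 * ((Dn : ℝ) * (Dn : ℝ))
          = ((24 * (k : ℝ)) * (Dn : ℝ)) * ((24 * (k : ℝ)) * (Dn : ℝ)) := by ring
        _ ≤ N := h5
    -- goal : 18 * ((Dn * (Dn * k)) * (N * N)) * 4 ≤ N * (N-1) * (N-2)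
    have hcube : N * N * N ≤ 8 * (N * (N - 1) * (N - 2)) := by nlinarith
    have hL8 : 8 * ((k:ℝ) * (18 * (((Dn:ℝ) * ((Dn:ℝ) * (k:ℝ))) * (N * N)) * 4)) ≤ N * N * N := by
      calc 8 * ((k:ℝ) * (18 * (((Dn:ℝ) * ((Dn:ℝ) * (k:ℝ))) * (N * N)) * 4))
          = (576 * (k : ℝ) ^ 2 * ((Dn : ℝ) * (Dn : ℝ))) * (N * N) := by ring
        _ ≤ N * (N * N) := by
            apply mul_le_mul_of_nonneg_right h576 (by positivity)
        _ = N * N * N := by ring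
    have ha : (0:ℝ) ≤ 18 * (((Dn:ℝ) * ((Dn:ℝ) * (k:ℝ))) * (N * N)) * 4 := by positivity
    have hLk : 8 * (18 * (((Dn:ℝ) * ((Dn:ℝ) * (k:ℝ))) * (N * N)) * 4)
        ≤ 8 * ((k:ℝ) * (18 * (((Dn:ℝ) * ((Dn:ℝ) * (k:ℝ))) * (N * N)) * 4)) := by
      nlinarith [mul_le_mul_of_nonneg_right hk1 ha]
    nlinarith [hL8, hLk, hcube]
  -- distinctness
  have hdd : ∀ f ∈ JJ G χ, ∀ i j : Fin 3, i ≠ j → (f i).1 ≠ (f j).1 := by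
    intro f hf
    rw [mem_JJ] at hf
    obtain ⟨hxy, hxz, h12, -⟩ := hf
    exact pair3 (fun i => (f i).1) hxy.ne hxz.ne h12
  have hdr : ∀ f ∈ JJ G χ, ∀ i j : Fin 3, i ≠ j → (f i).2 ≠ (f j).2 := by
    intro f hf
    rw [mem_JJ] at hf
    obtain ⟨-, -, -, h01, h02, h12, -⟩ := hf
    exact pair3 (fun i => (f i).2) h01 h02 h12
  have hcV : Fintype.card (Fin n) = n := Fintype.card_fin n
  have hN3 : 3 ≤ Fintype.card (Fin n) * (Fintype.card (Fin n) - 1) * (Fintype.card (Fin n) - 2) := by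
    rw [hcV]
    have : 10 ≤ n := hn
    calc (3:ℕ) ≤ 10 * 9 * 8 := by norm_num
      _ ≤ n * (n - 1) * (n - 2) :=
        Nat.mul_le_mul (Nat.mul_le_mul (by omega) (by omega)) (by omega)
  have hd : ∀ f₀ ∈ JJ G χ, ((JJ G χ).filter fun f => ∃ i j : Fin 3,
        (f i).1 = (f₀ j).1 ∨ (f i).2 = (f₀ j).2).card * 4
      ≤ Fintype.card (Fin n) * (Fintype.card (Fin n) - 1) * (Fintype.card (Fin n) - 2) := by
    intro f₀ _
    rw [hcV]
    calc ((JJ G χ).filter fun f => ∃ i j : Fin 3,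
          (f i).1 = (f₀ j).1 ∨ (f i).2 = (f₀ j).2).card * 4
        ≤ 18 * ((Dn * (Dn * k)) * (n * n)) * 4 :=
          Nat.mul_le_mul_right _ (bConf G χ k Dn hnbr hcol f₀)
      _ ≤ n * (n - 1) * (n - 2) := hnum
  obtain ⟨π, hπ⟩ := lll_exists (JJ G χ) hdd hdr hN3 hd
  refine ⟨π.toEmbedding, ?_⟩
  intro x y z hxy hxz hyz heq
  set f : Fin 3 → Fin n × Fin n := ![(x, π x), (y, π y), (z, π z)] with hfdef
  have hfJ : f ∈ JJ G χ := by
    rw [mem_JJ]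
    have e0 : f 0 = (x, π x) := rfl
    have e1 : f 1 = (y, π y) := rfl
    have e2 : f 2 = (z, π z) := rfl
    rw [e0, e1, e2]
    refine ⟨hxy, hxz, hyz, ?_, ?_, ?_, heq⟩
    · exact fun h => (G.ne_of_adj hxy) (π.injective h)
    · exact fun h => (G.ne_of_adj hxz) (π.injective h)
    · exact fun h => hyz (π.injective h)
  exact hπ f hfJ (fun i => by fin_cases i <;> rfl)
end
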